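/- arXiv:2210.01262 — 9 statements merged into one kernel-verified Lean document; each statement's English description precedes it below -/
import Mathlib

section
/- For a circle C: |z - c| = r contained in the open unit disk, there exists a triangle inscribed in the unit circle and circumscribed about C if and only if |c|^2 = 1 - 2r. -/
open Complex

private lemma unit_conj {a : ℂ} (ha : ‖a‖ = 1) : a * (starRingEnd ℂ) a = 1 := by
  rw [Complex.mul_conj, Complex.normSq_eq_norm_sq, ha]; norm_num

private lemma sq_eq_r {A r : ℝ} (hA : 0 ≤ A) (hr : 0 < r) (h : A^2 = r^2) : A = r := by
  have h1 : (A - r)*(A + r) = 0 := by linear_combination h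
  rcases mul_eq_zero.mp h1 with h2 | h2
  · linarith
  · linarith

private lemma abs_mk {α β r : ℝ} (hr : 0 < r) (h : α^2 + β^2 = r^2) :
    ‖(α:ℂ) + (β:ℂ)*Complex.I‖ = r := by
  apply sq_eq_r (norm_nonneg _) hr
  rw [Complex.sq_norm, Complex.normSq_add_mul_I]; exact h

private lemma conj_mk (γ δ : ℝ) :
    (starRingEnd ℂ) ((γ:ℂ) + (δ:ℂ)*Complex.I) = (γ:ℂ) + ((-δ:ℝ):ℂ)*Complex.I := by
  rw [map_add, map_mul, Complex.conj_ofReal, Complex.conj_ofReal, Complex.conj_I]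
  push_cast; ring

private lemma re_mk {α β γ δ : ℝ} (h : α*γ + β*δ = 0) :
    ((((α:ℂ) + (β:ℂ)*Complex.I)) * (starRingEnd ℂ) ((γ:ℂ) + (δ:ℂ)*Complex.I)).re = 0 := by
  rw [conj_mk]
  simp only [Complex.mul_re, Complex.add_re, Complex.add_im, Complex.mul_re, Complex.mul_im,
    Complex.I_re, Complex.I_im, Complex.ofReal_re, Complex.ofReal_im]
  ring_nf
  linarith

private lemma tangent_side (p q c : ℂ) (r : ℝ) (hr : 0 < r) (hpq : p ≠ q) (t : ℝ)
    (ht : t ∈ Set.Icc (0:ℝ) 1)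
    (hfr : ‖p + (t:ℂ)*(q - p) - c‖ = r)
    (horth : ((q - p) * (starRingEnd ℂ) (p + (t:ℂ)*(q - p) - c)).re = 0) :
    (∃! w : ℂ, w ∈ segment ℝ p q ∧ ‖w - c‖ = r) ∧
    (∀ w ∈ segment ℝ p q, r ≤ ‖w - c‖) := by
  have hv : q - p ≠ 0 := sub_ne_zero.mpr (Ne.symm hpq)
  have hvpos : 0 < Complex.normSq (q - p) := Complex.normSq_pos.mpr hv
  set w₀ : ℂ := p + (t:ℂ)*(q - p) with hw₀
  have hw₀n : Complex.normSq (w₀ - c) = r^2 := by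
    rw [← Complex.sq_norm, hfr]
  have key : ∀ s : ℝ, Complex.normSq (p + (s:ℂ)*(q - p) - c)
      = r^2 + (s - t)^2 * Complex.normSq (q - p) := by
    intro s
    have hdecomp : p + (s:ℂ)*(q - p) - c = (w₀ - c) + ((s - t : ℝ):ℂ) * (q - p) := by
      rw [hw₀]; push_cast; ring
    rw [hdecomp, Complex.normSq_add]
    have h2 : ((w₀ - c) * (starRingEnd ℂ) (q - p)).re = 0 := by
      have := horth
      rw [← Complex.conj_re ((q - p) * (starRingEnd ℂ) (w₀ - c))] at this
      simpa [mul_comm] using this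
    have hre : ((w₀ - c) * (starRingEnd ℂ) (((s - t : ℝ):ℂ) * (q - p))).re = 0 := by
      rw [map_mul, Complex.conj_ofReal,
        show (w₀ - c) * (((s - t:ℝ):ℂ) * (starRingEnd ℂ) (q - p))
          = ((s - t:ℝ):ℂ) * ((w₀ - c) * (starRingEnd ℂ) (q - p)) by ring]
      rw [Complex.mul_re]
      simp only [Complex.ofReal_re, Complex.ofReal_im, zero_mul, sub_zero]
      rw [h2, mul_zero]
    rw [hre, hw₀n, Complex.normSq_mul, Complex.normSq_ofReal]
    ring
  have hseg : ∀ w ∈ segment ℝ p q, ∃ s : ℝ, s ∈ Set.Icc (0:ℝ) 1 ∧ w = p + (s:ℂ)*(q - p) := by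
    intro w hw
    rw [segment_eq_image' ℝ p q] at hw
    obtain ⟨s, hs, hws⟩ := hw
    refine ⟨s, hs, ?_⟩
    rw [← hws]
    show p + s • (q - p) = p + (s:ℂ) * (q - p)
    rw [Complex.real_smul]
  have hmin : ∀ w ∈ segment ℝ p q, r ≤ ‖w - c‖ := by
    intro w hw
    obtain ⟨s, _, rfl⟩ := hseg w hw
    have h1 : r^2 ≤ Complex.normSq (p + (s:ℂ)*(q - p) - c) := by
      rw [key s]; nlinarith [sq_nonneg (s - t), hvpos.le]
    rw [← Complex.sq_norm] at h1
    nlinarith [norm_nonneg (p + (s:ℂ)*(q - p) - c)]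
  refine ⟨⟨w₀, ⟨?_, hfr⟩, ?_⟩, hmin⟩
  · rw [segment_eq_image' ℝ p q]
    refine ⟨t, ht, ?_⟩
    show p + t • (q - p) = w₀
    rw [Complex.real_smul]
  · rintro w ⟨hwseg, hwr⟩
    obtain ⟨s, _, rfl⟩ := hseg w hwseg
    have h1 : Complex.normSq (p + (s:ℂ)*(q - p) - c) = r^2 := by
      rw [← Complex.sq_norm, hwr]
    rw [key s] at h1
    have : (s - t)^2 * Complex.normSq (q - p) = 0 := by linarith
    have hst : s = t := by
      rcases mul_eq_zero.mp this with h | h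
      · have := pow_eq_zero_iff (n := 2) (by norm_num) |>.mp h
        linarith
      · exact absurd h (ne_of_gt hvpos)
    rw [hst]

private lemma tangent_side_rot (u P Q C c : ℂ) (hu : ‖u‖ = 1) (hc : u * C = c)
    (r : ℝ) (hr : 0 < r) (hPQ : P ≠ Q) (t : ℝ) (ht : t ∈ Set.Icc (0:ℝ) 1)
    (hfr : ‖P + (t:ℂ)*(Q - P) - C‖ = r)
    (horth : ((Q - P) * (starRingEnd ℂ) (P + (t:ℂ)*(Q - P) - C)).re = 0) :
    (∃! w : ℂ, w ∈ segment ℝ (u*P) (u*Q) ∧ ‖w - c‖ = r) ∧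
    (∀ w ∈ segment ℝ (u*P) (u*Q), r ≤ ‖w - c‖) := by
  have hu0 : u ≠ 0 := by
    intro h; rw [h] at hu; simp at hu
  apply tangent_side (u*P) (u*Q) c r hr (fun h => hPQ (mul_left_cancel₀ hu0 h)) t ht
  · rw [show u*P + (t:ℂ)*(u*Q - u*P) - c = u * (P + (t:ℂ)*(Q - P) - C) by
      rw [← hc]; ring, norm_mul, hu, one_mul]
    exact hfr
  · rw [show u*P + (t:ℂ)*(u*Q - u*P) - c = u * (P + (t:ℂ)*(Q - P) - C) by rw [← hc]; ring,
      show (u*Q - u*P) * (starRingEnd ℂ) (u * (P + (t:ℂ)*(Q - P) - C))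
        = (u * (starRingEnd ℂ) u) * ((Q - P) * (starRingEnd ℂ) (P + (t:ℂ)*(Q - P) - C)) by
      rw [map_mul]; ring,
      unit_conj hu, one_mul]
    exact horth


private lemma side_eq (c : ℂ) (r : ℝ) (hr : 0 < r)
    (hsub : ∀ z : ℂ, ‖z - c‖ ≤ r → ‖z‖ < 1)
    {a b : ℂ} (ha : ‖a‖ = 1) (hb : ‖b‖ = 1) (hab : a ≠ b)
    (hex : ∃ w : ℂ, w ∈ segment ℝ a b ∧ ‖w - c‖ = r)
    (hmin : ∀ w ∈ segment ℝ a b, r ≤ ‖w - c‖) :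
    (c + a * b * (starRingEnd ℂ) c - a - b)^2 = 4 * (r:ℂ)^2 * a * b := by
  obtain ⟨w, hwseg, hwr⟩ := hex
  have hwseg' := hwseg
  rw [segment_eq_image' ℝ a b] at hwseg'
  obtain ⟨t, htIcc, hwdef⟩ := hwseg'
  have hwdef : a + (t:ℂ) * (b - a) = w := by
    rw [← hwdef]; show a + t • (b - a) = a + (t:ℂ) * (b - a); rw [Complex.real_smul]
  have hv : b - a ≠ 0 := sub_ne_zero.mpr (Ne.symm hab)
  have hA : 0 < Complex.normSq (b - a) := Complex.normSq_pos.mpr hv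
  -- endpoints strictly outside
  have henda : r < ‖a - c‖ := by
    by_contra h
    have := hsub a (by push_neg at h; linarith [h])
    rw [ha] at this; linarith
  have hendb : r < ‖b - c‖ := by
    by_contra h
    have := hsub b (by push_neg at h; linarith [h])
    rw [hb] at this; linarith
  have ht0 : 0 < t := by
    rcases lt_or_eq_of_le htIcc.1 with h | h
    · exact h
    · exfalso; rw [← h] at hwdef; simp at hwdef; rw [← hwdef] at hwr; linarith
  have ht1 : t < 1 := by
    rcases lt_or_eq_of_le htIcc.2 with h | h
    · exact h
    · exfalso; rw [h] at hwdef; push_cast at hwdef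
      have : w = b := by rw [← hwdef]; ring
      rw [this] at hwr; linarith
  have hwn : Complex.normSq (w - c) = r^2 := by rw [← Complex.sq_norm, hwr]
  -- orthogonality
  have hD : ((w - c) * (starRingEnd ℂ) (b - a)).re = 0 := by
    by_contra hD0
    set D := ((w - c) * (starRingEnd ℂ) (b - a)).re with hDdef
    set A := Complex.normSq (b - a) with hAdef
    set ε := min t (min (1 - t) (|D| / A)) with hεdef
    have hε : 0 < ε := by
      apply lt_min ht0
      apply lt_min (by linarith)
      exact div_pos (abs_pos.mpr hD0) hA
    have hεA : ε * A ≤ |D| := by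
      have h1 : ε ≤ |D| / A := le_trans (min_le_right _ _) (min_le_right _ _)
      rw [div_eq_mul_inv] at h1
      calc ε * A ≤ (|D| * A⁻¹) * A := by nlinarith
        _ = |D| := by field_simp
    have hnorm : ∀ s : ℝ, Complex.normSq (a + (s:ℂ)*(b - a) - c)
        = r^2 + 2*(s - t)*D + (s - t)^2 * A := by
      intro s
      have hdec : a + (s:ℂ)*(b - a) - c = (w - c) + ((s - t:ℝ):ℂ)*(b - a) := by
        rw [← hwdef]; push_cast; ring
      rw [hdec, Complex.normSq_add, Complex.normSq_mul, Complex.normSq_ofReal]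
      have hre : ((w - c) * (starRingEnd ℂ) (((s - t:ℝ):ℂ)*(b - a))).re = (s - t) * D := by
        rw [map_mul, Complex.conj_ofReal,
          show (w - c) * (((s - t:ℝ):ℂ) * (starRingEnd ℂ) (b - a))
            = ((s - t:ℝ):ℂ) * ((w - c) * (starRingEnd ℂ) (b - a)) by ring,
          Complex.mul_re]
        simp only [Complex.ofReal_re, Complex.ofReal_im, zero_mul, sub_zero]
        rfl
      rw [hre, hwn]; ring
    have hcontr : ∀ s : ℝ, s ∈ Set.Icc (0:ℝ) 1 → r^2 ≤ r^2 + 2*(s - t)*D + (s - t)^2 * A := by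
      intro s hs
      have hmem : a + (s:ℂ)*(b - a) ∈ segment ℝ a b := by
        rw [segment_eq_image' ℝ a b]
        exact ⟨s, hs, by show a + s • (b - a) = _; rw [Complex.real_smul]⟩
      have := hmin _ hmem
      have h2 : r^2 ≤ Complex.normSq (a + (s:ℂ)*(b - a) - c) := by
        rw [← Complex.sq_norm]
        nlinarith [norm_nonneg (a + (s:ℂ)*(b - a) - c)]
      rw [hnorm s] at h2; linarith
    rcases lt_or_gt_of_ne hD0 with hDneg | hDpos
    · -- D < 0 : take s = t + ε
      have hs : t + ε ∈ Set.Icc (0:ℝ) 1 := by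
        constructor
        · linarith
        · have : ε ≤ 1 - t := le_trans (min_le_right _ _) (min_le_left _ _)
          linarith
      have := hcontr _ hs
      have habs : |D| = -D := abs_of_neg hDneg
      nlinarith
    · have hs : t - ε ∈ Set.Icc (0:ℝ) 1 := by
        constructor
        · have : ε ≤ t := min_le_left _ _
          linarith
        · linarith
      have := hcontr _ hs
      have habs : |D| = D := abs_of_pos hDpos
      nlinarith
  -- from orthogonality: w - c = a*b*conj(w-c)
  have ha1 := unit_conj ha
  have hb1 := unit_conj hb
  have h2 : (w - c) * (starRingEnd ℂ) (b - a) + (starRingEnd ℂ) (w - c) * (b - a) = 0 := by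
    have := Complex.add_conj ((w - c) * (starRingEnd ℂ) (b - a))
    rw [hD] at this
    rw [show (starRingEnd ℂ) ((w - c) * (starRingEnd ℂ) (b - a))
        = (starRingEnd ℂ) (w - c) * (b - a) by rw [map_mul, Complex.conj_conj]] at this
    simpa using this
  rw [map_sub] at h2
  have hx : w - c = a * b * (starRingEnd ℂ) (w - c) := by
    have key : (a - b) * ((w - c) - a * b * (starRingEnd ℂ) (w - c)) = 0 := by
      linear_combination (a*b) * h2 - ((w - c)*a) * hb1 + ((w - c)*b) * ha1
    rcases mul_eq_zero.mp key with h | h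
    · exact absurd h (sub_ne_zero.mpr hab)
    · exact sub_eq_zero.mp h
  -- conjugated parametrization
  have hcw : (starRingEnd ℂ) a + (t:ℂ) * ((starRingEnd ℂ) b - (starRingEnd ℂ) a)
      = (starRingEnd ℂ) w := by
    have := congrArg (starRingEnd ℂ) hwdef
    rw [map_add, map_mul, map_sub, Complex.conj_ofReal] at this
    exact this
  have hx' : w - c = a * b * ((starRingEnd ℂ) w - (starRingEnd ℂ) c) := by
    rw [← map_sub]; exact hx
  have hmc : (w - c) * ((starRingEnd ℂ) w - (starRingEnd ℂ) c) = (r:ℂ)^2 := by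
    rw [← map_sub, Complex.mul_conj, hwn]; push_cast; ring
  have hline : w + a * b * (starRingEnd ℂ) w = a + b := by
    linear_combination (-1:ℂ)*hwdef - (a*b)*hcw + (b - (t:ℂ)*b)*ha1 + ((t:ℂ)*a)*hb1
  have hE : c + a * b * (starRingEnd ℂ) c - a - b = -2*(w - c) := by
    linear_combination hline + hx'
  rw [hE]
  linear_combination (4*(w - c))*hx' + (4*a*b)*hmc


private lemma chapple_alg {a b e c k s : ℂ} (hab : a ≠ b) (hbe : b ≠ e) (hae : a ≠ e)
    (Pab : (c + a*b*k - a - b)^2 = 4*s*a*b)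
    (Pbe : (c + b*e*k - b - e)^2 = 4*s*b*e)
    (Pae : (c + a*e*k - a - e)^2 = 4*s*a*e) :
    (1 - c*k)^2 = 4*s := by
  have hQa : (a*k - 1)*(2*(c - a)) + (b + e)*(a*k - 1)^2 - 4*s*a = 0 := by
    have key : (b - e) * ((a*k - 1)*(2*(c - a)) + (b + e)*(a*k - 1)^2 - 4*s*a) = 0 := by
      linear_combination Pab - Pae
    rcases mul_eq_zero.mp key with h | h
    · exact absurd h (sub_ne_zero.mpr hbe)
    · exact h
  have hQb : (b*k - 1)*(2*(c - b)) + (a + e)*(b*k - 1)^2 - 4*s*b = 0 := by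
    have key : (a - e) * ((b*k - 1)*(2*(c - b)) + (a + e)*(b*k - 1)^2 - 4*s*b) = 0 := by
      linear_combination Pab - Pbe
    rcases mul_eq_zero.mp key with h | h
    · exact absurd h (sub_ne_zero.mpr hae)
    · exact h
  have hD : 4*s + 2*(a + b + e)*k - 2*c*k - 1 - k^2*(a*b + a*e + b*e) = 0 := by
    have key : (a - b) * (4*s + 2*(a + b + e)*k - 2*c*k - 1 - k^2*(a*b + a*e + b*e)) = 0 := by
      linear_combination hQb - hQa
    rcases mul_eq_zero.mp key with h | h
    · exact absurd h (sub_ne_zero.mpr hab)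
    · exact h
  have hq : 2*c - (a + b + e) + k^2*a*b*e = 0 := by
    linear_combination -hQa - a*hD
  linear_combination (k^2*a*b - 1)*hD + (k^2*(a + b) - 2*k)*hq + k^2*Pab

/-- Chapple's formula: for a circle `|z - c| = r` contained in the open unit
disk, there exists a triangle inscribed in the unit circle and circumscribed
about the circle iff `|c|^2 = 1 - 2r`. -/
theorem chapple (c : ℂ) (r : ℝ) (hr : 0 < r)
    (hsub : {z : ℂ | ‖z - c‖ ≤ r} ⊆ {z : ℂ | ‖z‖ < 1}) :
    (∃ z₁ z₂ z₃ : ℂ, ‖z₁‖ = 1 ∧ ‖z₂‖ = 1 ∧ ‖z₃‖ = 1 ∧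
      z₁ ≠ z₂ ∧ z₂ ≠ z₃ ∧ z₁ ≠ z₃ ∧
      ∀ p : ℂ × ℂ, p ∈ ({(z₁, z₂), (z₂, z₃), (z₁, z₃)} : Set (ℂ × ℂ)) →
        (∃! w : ℂ, w ∈ segment ℝ p.1 p.2 ∧ ‖w - c‖ = r) ∧
        (∀ w ∈ segment ℝ p.1 p.2, r ≤ ‖w - c‖)) ↔
    ‖c‖ ^ 2 = 1 - 2 * r := by
  have hsub' : ∀ z : ℂ, ‖z - c‖ ≤ r → ‖z‖ < 1 := fun z h => hsub h
  constructor
  · rintro ⟨z₁, z₂, z₃, h1, h2, h3, h12, h23, h13, hall⟩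
    have hm1 : ((z₁, z₂) : ℂ × ℂ) ∈ ({(z₁, z₂), (z₂, z₃), (z₁, z₃)} : Set (ℂ × ℂ)) := by simp
    have hm2 : ((z₂, z₃) : ℂ × ℂ) ∈ ({(z₁, z₂), (z₂, z₃), (z₁, z₃)} : Set (ℂ × ℂ)) := by simp
    have hm3 : ((z₁, z₃) : ℂ × ℂ) ∈ ({(z₁, z₂), (z₂, z₃), (z₁, z₃)} : Set (ℂ × ℂ)) := by simp
    have P1 := side_eq c r hr hsub' h1 h2 h12 (hall _ hm1).1.exists (hall _ hm1).2
    have P2 := side_eq c r hr hsub' h2 h3 h23 (hall _ hm2).1.exists (hall _ hm2).2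
    have P3 := side_eq c r hr hsub' h1 h3 h13 (hall _ hm3).1.exists (hall _ hm3).2
    have halg := chapple_alg h12 h23 h13 P1 P2 P3
    rw [Complex.mul_conj] at halg
    have hre : (1 - Complex.normSq c)^2 = 4*r^2 := by
      have : ((1 - Complex.normSq c : ℝ) : ℂ)^2 = ((4*r^2 : ℝ) : ℂ) := by
        push_cast
        linear_combination halg
      exact_mod_cast this
    have hlt : Complex.normSq c < 1 := by
      have := hsub' c (by simp [hr.le])
      rw [← Complex.sq_norm]
      nlinarith [norm_nonneg c]
    have : 1 - Complex.normSq c = 2*r := by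
      have hfac : (1 - Complex.normSq c - 2*r) * (1 - Complex.normSq c + 2*r) = 0 := by
        linear_combination hre
      rcases mul_eq_zero.mp hfac with h | h
      · linarith
      · linarith
    rw [Complex.sq_norm]; linarith
  · intro habs
    set d : ℝ := ‖c‖ with hddef
    have hd0 : 0 ≤ d := norm_nonneg c
    have hd2 : d^2 = 1 - 2*r := habs
    have hd1 : d < 1 := by nlinarith
    have hrle : r ≤ 1/2 := by nlinarith
    obtain ⟨u, hu, huc⟩ : ∃ u : ℂ, ‖u‖ = 1 ∧ u * (d:ℂ) = c := by
      by_cases hc : c = 0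
      · refine ⟨1, by simp, ?_⟩
        rw [hc]; simp [hddef, hc]
      · refine ⟨c / (d:ℂ), by
          rw [norm_div, Complex.norm_real, Real.norm_of_nonneg hd0]
          exact div_self (by simpa [hddef] using (norm_ne_zero_iff.mpr hc)), ?_⟩
        have hdne : (d:ℂ) ≠ 0 := by
          simpa [Complex.ofReal_eq_zero, hddef] using (norm_ne_zero_iff.mpr hc)
        field_simp
    have hu0 : u ≠ 0 := by intro h; rw [h] at hu; simp at hu
    set y₀ : ℝ := Real.sqrt (1 - (d - r)^2) with hy₀def
    have hsq : 0 < 1 - (d - r)^2 := by nlinarith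
    have hy₀ : 0 < y₀ := Real.sqrt_pos.mpr hsq
    have hy₀sq : y₀^2 = 1 - (d - r)^2 := Real.sq_sqrt hsq.le
    set B : ℂ := ((d - r : ℝ):ℂ) + (y₀:ℂ)*Complex.I with hBdef
    have hBabs : ‖B‖ = 1 := abs_mk one_pos (by nlinarith)
    have hBim : B.im = y₀ := by simp [hBdef]
    have hBconj : (starRingEnd ℂ) B = ((d - r : ℝ):ℂ) + ((-y₀:ℝ):ℂ)*Complex.I := conj_mk _ _
    have hBne1 : B ≠ 1 := by
      intro h
      have := congrArg Complex.im h
      rw [hBim] at this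
      simp at this
      exact hy₀.ne' (by linarith)
    have hBneconj : B ≠ (starRingEnd ℂ) B := by
      intro h
      have := congrArg Complex.im h
      rw [hBim, hBconj] at this
      simp at this
      linarith
    have hconjBne1 : (starRingEnd ℂ) B ≠ 1 := by
      intro h
      have := congrArg Complex.im h
      rw [hBconj] at this
      simp at this
      exact hy₀.ne' (by linarith)
    have htIcc : (1 - d)/2 ∈ Set.Icc (0:ℝ) 1 := ⟨by linarith, by linarith⟩
    have thalf : (1/2 : ℝ) ∈ Set.Icc (0:ℝ) 1 := by norm_num
    refine ⟨u * 1, u * B, u * (starRingEnd ℂ) B, by simp [hu], by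
        rw [norm_mul, hu, hBabs, one_mul], by
        rw [norm_mul, hu, Complex.norm_conj, hBabs, one_mul],
      fun h => hBne1 (mul_left_cancel₀ hu0 h).symm,
      fun h => hBneconj (mul_left_cancel₀ hu0 h),
      fun h => hconjBne1 (mul_left_cancel₀ hu0 h).symm, ?_⟩
    intro p hp
    simp only [Set.mem_insert_iff, Set.mem_singleton_iff] at hp
    rcases hp with rfl | rfl | rfl
    · -- side (1, B), t = (1-d)/2
      apply tangent_side_rot u 1 B ((d:ℝ):ℂ) c hu huc r hr (fun h => hBne1 h.symm)
        ((1 - d)/2) htIcc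
      · rw [show (1:ℂ) + (((1 - d)/2 : ℝ):ℂ)*(B - 1) - ((d:ℝ):ℂ)
            = ((1 + (1-d)/2*((d-r) - 1) - d : ℝ):ℂ) + (((1-d)/2*y₀ : ℝ):ℂ)*Complex.I by
          rw [hBdef]; push_cast; ring]
        apply abs_mk hr
        linear_combination (((1-d)/2)^2) * hy₀sq + ((d - r - 1)/2) * hd2
      · rw [show (1:ℂ) + (((1 - d)/2 : ℝ):ℂ)*(B - 1) - ((d:ℝ):ℂ)
            = ((1 + (1-d)/2*((d-r) - 1) - d : ℝ):ℂ) + (((1-d)/2*y₀ : ℝ):ℂ)*Complex.I by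
          rw [hBdef]; push_cast; ring,
          show B - 1 = ((d - r - 1 : ℝ):ℂ) + ((y₀:ℝ):ℂ)*Complex.I by
          rw [hBdef]; push_cast; ring]
        apply re_mk
        linear_combination ((1-d)/2) * hy₀sq
    · -- side (B, conj B), t = 1/2
      apply tangent_side_rot u B ((starRingEnd ℂ) B) ((d:ℝ):ℂ) c hu huc r hr hBneconj
        (1/2) thalf
      · rw [show B + ((1/2 : ℝ):ℂ)*((starRingEnd ℂ) B - B) - ((d:ℝ):ℂ)
            = ((-r : ℝ):ℂ) + ((0:ℝ):ℂ)*Complex.I by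
          rw [hBconj, hBdef]; push_cast; ring]
        apply abs_mk hr
        ring
      · rw [show B + ((1/2 : ℝ):ℂ)*((starRingEnd ℂ) B - B) - ((d:ℝ):ℂ)
            = ((-r : ℝ):ℂ) + ((0:ℝ):ℂ)*Complex.I by
          rw [hBconj, hBdef]; push_cast; ring,
          show (starRingEnd ℂ) B - B = ((0:ℝ):ℂ) + ((-2*y₀ : ℝ):ℂ)*Complex.I by
          rw [hBconj, hBdef]; push_cast; ring]
        apply re_mk
        ring
    · -- side (1, conj B), t = (1-d)/2
      apply tangent_side_rot u 1 ((starRingEnd ℂ) B) ((d:ℝ):ℂ) c hu huc r hr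
        (fun h => hconjBne1 h.symm) ((1 - d)/2) htIcc
      · rw [show (1:ℂ) + (((1 - d)/2 : ℝ):ℂ)*((starRingEnd ℂ) B - 1) - ((d:ℝ):ℂ)
            = ((1 + (1-d)/2*((d-r) - 1) - d : ℝ):ℂ) + (((1-d)/2*(-y₀) : ℝ):ℂ)*Complex.I by
          rw [hBconj]; push_cast; ring]
        apply abs_mk hr
        linear_combination (((1-d)/2)^2) * hy₀sq + ((d - r - 1)/2) * hd2
      · rw [show (1:ℂ) + (((1 - d)/2 : ℝ):ℂ)*((starRingEnd ℂ) B - 1) - ((d:ℝ):ℂ)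
            = ((1 + (1-d)/2*((d-r) - 1) - d : ℝ):ℂ) + (((1-d)/2*(-y₀) : ℝ):ℂ)*Complex.I by
          rw [hBconj]; push_cast; ring,
          show (starRingEnd ℂ) B - 1 = ((d - r - 1 : ℝ):ℂ) + ((-y₀:ℝ):ℂ)*Complex.I by
          rw [hBconj]; push_cast; ring]
        apply re_mk
        linear_combination ((1-d)/2) * hy₀sq
end

section
/- Let B be a canonical Blaschke product of degree 3 with zeros 0, a₁, a₂ in the unit disk. For each λ on the unit circle, let w₁, w₂, w₃ be the three distinct preimages of λ under B. Then for all j ≠ k, the line through w_j and w_k is tangent to the ellipse {w : |w - a₁| + |w - a₂| = |1 - conj(a₁) a₂|}. -/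
open Complex ComplexConjugate

lemma DGM.unit_mul_conj (w : ℂ) (hw : ‖w‖ = 1) : w * conj w = 1 := by
  rw [Complex.mul_conj]; norm_cast; rw [← Complex.sq_norm, hw]; norm_num

lemma DGM.denom_ne (a u : ℂ) (ha : ‖a‖ < 1) (hu : ‖u‖ = 1) :
    1 - conj a * u ≠ 0 := by
  intro h
  have h1 : conj a * u = 1 := by linear_combination -h
  have := congrArg norm h1
  rw [norm_mul, norm_one, Complex.norm_conj, hu, mul_one] at this
  exact absurd this (ne_of_lt ha)

lemma DGM.smul_abs (t : ℝ) (z : ℂ) : ‖t • z‖ = |t| * ‖z‖ := by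
  rw [norm_smul, Real.norm_eq_abs]

lemma DGM.strict_ineq (a₁ a₂ : ℂ) (ha₁ : ‖a₁‖ < 1) (ha₂ : ‖a₂‖ < 1) :
    ‖a₁ - a₂‖ < ‖1 - conj a₁ * a₂‖ := by
  have h1 : Complex.normSq a₁ < 1 := by rw [← Complex.sq_norm]; nlinarith [norm_nonneg a₁]
  have h2 : Complex.normSq a₂ < 1 := by rw [← Complex.sq_norm]; nlinarith [norm_nonneg a₂]
  have key : Complex.normSq (1 - conj a₁ * a₂) - Complex.normSq (a₁ - a₂)
      = (1 - Complex.normSq a₁) * (1 - Complex.normSq a₂) := by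
    simp only [Complex.normSq_apply, Complex.sub_re, Complex.sub_im, Complex.mul_re,
      Complex.mul_im, Complex.conj_re, Complex.conj_im, Complex.one_re, Complex.one_im]
    ring
  have h3 : ‖a₁ - a₂‖ ^ 2 < ‖1 - conj a₁ * a₂‖ ^ 2 := by
    rw [Complex.sq_norm, Complex.sq_norm]; nlinarith
  exact lt_of_pow_lt_pow_left₀ 2 (norm_nonneg _) h3

lemma DGM.vieta (u v w c₂ c₁ c₀ : ℂ) (huv : u ≠ v) (huw : u ≠ w) (hvw : v ≠ w)
    (hu : u^3 - c₂*u^2 + c₁*u - c₀ = 0) (hv : v^3 - c₂*v^2 + c₁*v - c₀ = 0)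
    (hw : w^3 - c₂*w^2 + c₁*w - c₀ = 0) :
    u + v + w = c₂ ∧ u * v * w = c₀ := by
  have Euv : u^2 + u*v + v^2 - c₂*(u+v) + c₁ = 0 := by
    have h : (u - v) * (u^2 + u*v + v^2 - c₂*(u+v) + c₁) = 0 := by linear_combination hu - hv
    exact (mul_eq_zero.mp h).resolve_left (sub_ne_zero.2 huv)
  have Euw : u^2 + u*w + w^2 - c₂*(u+w) + c₁ = 0 := by
    have h : (u - w) * (u^2 + u*w + w^2 - c₂*(u+w) + c₁) = 0 := by linear_combination hu - hw
    exact (mul_eq_zero.mp h).resolve_left (sub_ne_zero.2 huw)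
  have esum : u + v + w = c₂ := by
    have h : (v - w) * (u + v + w - c₂) = 0 := by linear_combination Euv - Euw
    have := (mul_eq_zero.mp h).resolve_left (sub_ne_zero.2 hvw)
    linear_combination this
  exact ⟨esum, by linear_combination hu - u * Euv + u*v*esum⟩

lemma DGM.key_prod (a₁ a₂ w lam : ℂ) (hw : w * conj w = 1)
    (h1 : 1 - conj a₁ * w ≠ 0) (h2 : 1 - conj a₂ * w ≠ 0)
    (hc : w * (w - a₁) * (w - a₂) = lam * ((1 - conj a₁ * w) * (1 - conj a₂ * w))) :
    (a₁ + lam * conj a₁ * conj a₂ - w - lam * conj a₁ * conj w) * (1 - conj a₁ * w)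
      = (a₁ - w) * (1 - conj a₁ * a₂) := by
  have hw0 : w ≠ 0 := by rintro rfl; simp at hw
  have hcw : conj w = w⁻¹ := eq_inv_of_mul_eq_one_right hw
  have hlam : lam = w * (w - a₁) * (w - a₂) / ((1 - conj a₁ * w) * (1 - conj a₂ * w)) := by
    rw [eq_div_iff (mul_ne_zero h1 h2)]; exact hc.symm
  rw [hcw]
  have hwi : w * w⁻¹ = 1 := mul_inv_cancel₀ hw0
  have hE : w * ((a₁ + lam * conj a₁ * conj a₂ - w - lam * conj a₁ * w⁻¹) * (1 - conj a₁ * w)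
      - (a₁ - w) * (1 - conj a₁ * a₂)) = 0 := by
    linear_combination (conj a₁) * hc + (-(lam * conj a₁ * (1 - conj a₁ * w))) * hwi
  exact sub_eq_zero.mp ((mul_eq_zero.mp hE).resolve_left hw0)

lemma DGM.refl_eq (a₁ u v p : ℂ) (s : ℝ)
    (hu1 : u * conj u = 1) (hv1 : v * conj v = 1)
    (hp : p = u + (s:ℂ) * (v - u)) :
    p - (u + v - u*v*conj a₁) = -(u*v) * conj (p - a₁) := by
  have hu0 : u ≠ 0 := by rintro rfl; simp at hu1
  have hv0 : v ≠ 0 := by rintro rfl; simp at hv1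
  have hcu : conj u = u⁻¹ := eq_inv_of_mul_eq_one_right hu1
  have hcv : conj v = v⁻¹ := eq_inv_of_mul_eq_one_right hv1
  subst hp
  simp only [map_add, map_sub, map_mul, map_inv₀, Complex.conj_ofReal, Complex.conj_conj,
    hcu, hcv, inv_inv]
  field_simp
  ring

lemma DGM.refl_real (a₁ u v : ℂ) (hu1 : u * conj u = 1) (hv1 : v * conj v = 1) :
    conj (((u + v - u*v*conj a₁) + a₁ - 2*u) * conj (v - u))
      = ((u + v - u*v*conj a₁) + a₁ - 2*u) * conj (v - u) := by
  have hu0 : u ≠ 0 := by rintro rfl; simp at hu1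
  have hv0 : v ≠ 0 := by rintro rfl; simp at hv1
  have hcu : conj u = u⁻¹ := eq_inv_of_mul_eq_one_right hu1
  have hcv : conj v = v⁻¹ := eq_inv_of_mul_eq_one_right hv1
  simp only [map_add, map_sub, map_mul, map_inv₀, map_ofNat, Complex.conj_conj, hcu, hcv, inv_inv]
  field_simp
  ring

lemma DGM.line_iff (u v : ℂ) (huv : u ≠ v) (p : ℂ) :
    (∃ s : ℝ, p = u + s • (v - u)) ↔ ((p - u) * conj (v - u)).im = 0 := by
  have hd : v - u ≠ 0 := sub_ne_zero.2 (Ne.symm huv)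
  constructor
  · rintro ⟨s, rfl⟩
    simp only [Complex.real_smul, add_sub_cancel_left]
    rw [mul_assoc, Complex.mul_conj]
    simp [Complex.mul_im]
  · intro h
    set R := ((p - u) * conj (v - u)).re with hR
    set N := Complex.normSq (v - u) with hN
    refine ⟨R / N, ?_⟩
    have hns : (N : ℂ) ≠ 0 := by
      norm_cast
      simpa [hN] using (Complex.normSq_eq_zero (z := v - u)).not.2 hd
    have hre : ((p - u) * conj (v - u)) = ((R : ℝ) : ℂ) := by
      apply Complex.ext
      · simp [hR]
      · rw [h]; simp
    have h2 : (p - u) * (N : ℂ) = ((R : ℝ) : ℂ) * (v - u) := by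
      rw [hN, ← Complex.mul_conj]
      linear_combination (v - u) * hre
    rw [Complex.real_smul]
    push_cast
    field_simp
    linear_combination h2

lemma DGM.f_affine (u d x y : ℂ) (t : ℝ) :
    ((x + t • (y - x) - u) * conj d).im
      = ((x - u) * conj d).im + t * (((y - u) * conj d).im - ((x - u) * conj d).im) := by
  have h : (x + t • (y - x) - u) * conj d
      = ((x - u) * conj d) + (t:ℂ) * (((y - u) * conj d) - ((x - u) * conj d)) := by
    rw [Complex.real_smul]; ring
  rw [h]
  simp [Complex.add_im, Complex.mul_im]

lemma DGM.t_mem (x y : ℝ) (h : x * y < 0) : 0 ≤ x / (x - y) ∧ x / (x - y) ≤ 1 := by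
  rcases lt_trichotomy x 0 with hx | hx | hx
  · have hy : 0 < y := by nlinarith
    have hD : x - y < 0 := by linarith
    constructor
    · rw [← neg_div_neg_eq]; apply div_nonneg <;> linarith
    · rw [← neg_div_neg_eq, div_le_one (by linarith)]; linarith
  · exfalso; rw [hx] at h; simp at h
  · have hy : y < 0 := by nlinarith
    have hD : 0 < x - y := by linarith
    constructor
    · apply div_nonneg <;> linarith
    · rw [div_le_one hD]; linarith

lemma DGM.master (a₁ a₂ : ℂ) (ha₁ : ‖a₁‖ < 1) (ha₂ : ‖a₂‖ < 1)
    (lam : ℂ) (u v w : ℂ) (huv : u ≠ v) (huw : u ≠ w) (hvw : v ≠ w)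
    (hu : ‖u‖ = 1) (hv : ‖v‖ = 1) (hw : ‖w‖ = 1)
    (hcu : u * (u - a₁) * (u - a₂) = lam * ((1 - conj a₁ * u) * (1 - conj a₂ * u)))
    (hcv : v * (v - a₁) * (v - a₂) = lam * ((1 - conj a₁ * v) * (1 - conj a₂ * v)))
    (hcw : w * (w - a₁) * (w - a₂) = lam * ((1 - conj a₁ * w) * (1 - conj a₂ * w))) :
    (∃! p : ℂ, (∃ s : ℝ, p = u + s • (v - u)) ∧
        ‖p - a₁‖ + ‖p - a₂‖ = ‖1 - conj a₁ * a₂‖) ∧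
      (∀ p : ℂ, (∃ s : ℝ, p = u + s • (v - u)) →
        ‖1 - conj a₁ * a₂‖ ≤ ‖p - a₁‖ + ‖p - a₂‖) := by
  have hu1 := DGM.unit_mul_conj u hu
  have hv1 := DGM.unit_mul_conj v hv
  have hw1 := DGM.unit_mul_conj w hw
  set r := ‖1 - conj a₁ * a₂‖ with hr
  set c₂ : ℂ := a₁ + a₂ + lam * conj a₁ * conj a₂ with hc₂
  set c₁ : ℂ := a₁ * a₂ + lam * (conj a₁ + conj a₂) with hc₁
  -- cubic equations
  have hcu' : u^3 - c₂*u^2 + c₁*u - lam = 0 := by rw [hc₂, hc₁]; linear_combination hcu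
  have hcv' : v^3 - c₂*v^2 + c₁*v - lam = 0 := by rw [hc₂, hc₁]; linear_combination hcv
  have hcw' : w^3 - c₂*w^2 + c₁*w - lam = 0 := by rw [hc₂, hc₁]; linear_combination hcw
  obtain ⟨esum, eprod⟩ := DGM.vieta u v w c₂ c₁ lam huv huw hvw hcu' hcv' hcw'
  set A : ℂ := u + v - u*v*conj a₁ with hA
  -- |A - a₂| = r
  have hAr : ‖A - a₂‖ = r := by
    have hAeq : A - a₂ = a₁ + lam * conj a₁ * conj a₂ - w - lam * conj a₁ * conj w := by
      rw [hA]
      linear_combination esum - conj a₁ * conj w * eprod + (u*v*conj a₁) * hw1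
    have h1w := DGM.denom_ne a₁ w ha₁ hw
    have h2w := DGM.denom_ne a₂ w ha₂ hw
    have hprod := DGM.key_prod a₁ a₂ w lam hw1 h1w h2w hcw
    have habs := congrArg norm (hAeq ▸ hprod)
    rw [norm_mul, norm_mul] at habs
    have heq1 : ‖1 - conj a₁ * w‖ = ‖a₁ - w‖ := by
      have : 1 - conj a₁ * w = w * (conj w - conj a₁) := by linear_combination -hw1
      rw [this, norm_mul, hw, one_mul, ← map_sub conj w a₁, Complex.norm_conj,
        norm_sub_rev]
    have hne : ‖a₁ - w‖ ≠ 0 := by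
      rw [norm_ne_zero_iff, sub_ne_zero]
      intro h; rw [h] at ha₁; rw [hw] at ha₁; exact lt_irrefl 1 ha₁
    rw [heq1] at habs
    exact mul_right_cancel₀ hne (by rw [habs]; ring)
  have habs12 : ‖a₁ - a₂‖ < r := DGM.strict_ineq a₁ a₂ ha₁ ha₂
  -- line and f
  set d : ℂ := v - u with hd
  have hd0 : d ≠ 0 := sub_ne_zero.2 (Ne.symm huv)
  set f : ℂ → ℝ := fun z => ((z - u) * conj d).im with hf
  have hline : ∀ p : ℂ, (∃ s : ℝ, p = u + s • (v - u)) ↔ f p = 0 := fun p =>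
    DGM.line_iff u v huv p
  have haff : ∀ x y : ℂ, ∀ t : ℝ, f (x + t • (y - x)) = f x + t * (f y - f x) :=
    fun x y t => DGM.f_affine u d x y t
  -- reflection: points on line are equidistant from a₁ and A
  have hrefl : ∀ p : ℂ, (∃ s : ℝ, p = u + s • (v - u)) →
      ‖p - a₁‖ = ‖p - A‖ := by
    rintro p ⟨s, hp⟩
    rw [Complex.real_smul] at hp
    have := DGM.refl_eq a₁ u v p s hu1 hv1 hp
    rw [← hA] at this
    rw [this, norm_mul, norm_neg, norm_mul, hu, hv, Complex.norm_conj]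
    ring
  -- inequality part
  have hineq : ∀ p : ℂ, (∃ s : ℝ, p = u + s • (v - u)) →
      r ≤ ‖p - a₁‖ + ‖p - a₂‖ := by
    intro p hp
    rw [hrefl p hp]
    calc r = ‖A - a₂‖ := hAr.symm
    _ ≤ ‖A - p‖ + ‖p - a₂‖ := norm_sub_le_norm_sub_add_norm_sub A p a₂
    _ = ‖p - A‖ + ‖p - a₂‖ := by rw [norm_sub_rev A p]
  have hrpos : 0 < r := lt_of_le_of_lt (norm_nonneg _) habs12
  -- f a₁ ≠ 0
  have ha₁f : f a₁ ≠ 0 := by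
    intro h
    have hmem := (hline a₁).mpr h
    have := hrefl a₁ hmem
    simp only [sub_self, norm_zero] at this
    have hAa : A = a₁ := by
      have := norm_eq_zero.mp this.symm
      linear_combination -this
    rw [hAa] at hAr
    exact absurd hAr (ne_of_lt habs12)
  -- f a₂ ≠ 0
  have ha₂f : f a₂ ≠ 0 := by
    intro h
    have hmem := (hline a₂).mpr h
    have := hineq a₂ hmem
    simp only [sub_self, norm_zero, add_zero] at this
    have : r ≤ ‖a₁ - a₂‖ := by
      rwa [norm_sub_rev a₂ a₁] at this
    exact absurd this (not_le.2 habs12)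
  -- same side
  have hsame : 0 < f a₁ * f a₂ := by
    by_contra hcon
    push_neg at hcon
    have hlt : f a₁ * f a₂ < 0 :=
      lt_of_le_of_ne hcon (mul_ne_zero ha₁f ha₂f)
    set t : ℝ := f a₁ / (f a₁ - f a₂) with ht
    have ht01 : 0 ≤ t ∧ t ≤ 1 := DGM.t_mem _ _ hlt
    have hden : f a₁ - f a₂ ≠ 0 := by
      intro h
      have heq : f a₁ = f a₂ := by linarith
      rw [heq] at hlt
      nlinarith [mul_self_nonneg (f a₂)]
    set p : ℂ := a₁ + t • (a₂ - a₁) with hp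
    have hfp : f p = 0 := by
      rw [hp, haff a₁ a₂ t, ht]
      field_simp
      ring
    have hmem := (hline p).mpr hfp
    have h1 := hineq p hmem
    have he1 : ‖p - a₁‖ = t * ‖a₂ - a₁‖ := by
      rw [hp, add_sub_cancel_left, DGM.smul_abs, _root_.abs_of_nonneg ht01.1]
    have he2 : ‖p - a₂‖ = (1 - t) * ‖a₂ - a₁‖ := by
      have : p - a₂ = -((1 - t) • (a₂ - a₁)) := by
        rw [hp, Complex.real_smul, Complex.real_smul]
        push_cast
        ring
      rw [this, norm_neg, DGM.smul_abs, _root_.abs_of_nonneg (by linarith [ht01.2])]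
    rw [he1, he2] at h1
    have : r ≤ ‖a₂ - a₁‖ := by nlinarith
    rw [norm_sub_rev a₂ a₁] at this
    exact absurd this (not_le.2 habs12)
  -- f A = - f a₁
  have hAf : f A = - f a₁ := by
    have hreal := DGM.refl_real a₁ u v hu1 hv1
    rw [← hA, ← hd] at hreal
    have him : ((A + a₁ - 2*u) * conj d).im = 0 := Complex.conj_eq_iff_im.mp hreal
    have hsum : (A - u) * conj d + (a₁ - u) * conj d = (A + a₁ - 2*u) * conj d := by ring
    have h2 : f A + f a₁ = ((A + a₁ - 2*u) * conj d).im := by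
      rw [hf]; dsimp only; rw [← Complex.add_im, hsum]
    rw [him] at h2
    linarith
  -- the tangency point
  have hfAa₂ : f A * f a₂ < 0 := by rw [hAf]; nlinarith
  have hden : f A - f a₂ ≠ 0 := by
    intro h
    have heq : f A = f a₂ := by linarith
    rw [heq] at hfAa₂
    nlinarith [mul_self_nonneg (f a₂)]
  set t₀ : ℝ := f A / (f A - f a₂) with ht₀
  have ht01 : 0 ≤ t₀ ∧ t₀ ≤ 1 := DGM.t_mem _ _ hfAa₂
  set p₀ : ℂ := A + t₀ • (a₂ - A) with hp₀
  have hfp₀ : f p₀ = 0 := by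
    rw [hp₀, haff A a₂ t₀, ht₀]
    field_simp
    ring
  have hp₀mem : ∃ s : ℝ, p₀ = u + s • (v - u) := (hline p₀).mpr hfp₀
  have he1 : ‖p₀ - A‖ = t₀ * ‖a₂ - A‖ := by
    rw [hp₀, add_sub_cancel_left, DGM.smul_abs, _root_.abs_of_nonneg ht01.1]
  have he2 : ‖p₀ - a₂‖ = (1 - t₀) * ‖a₂ - A‖ := by
    have h : p₀ - a₂ = -((1 - t₀) • (a₂ - A)) := by
      rw [hp₀, Complex.real_smul, Complex.real_smul]
      push_cast
      ring
    rw [h, norm_neg, DGM.smul_abs, _root_.abs_of_nonneg (by linarith [ht01.2])]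
  have hp₀eq : ‖p₀ - a₁‖ + ‖p₀ - a₂‖ = r := by
    rw [hrefl p₀ hp₀mem, he1, he2]
    have : ‖a₂ - A‖ = r := by rw [norm_sub_rev a₂ A, hAr]
    rw [this]; ring
  refine ⟨⟨p₀, ⟨hp₀mem, hp₀eq⟩, ?_⟩, hineq⟩
  rintro p ⟨hpmem, hpeq⟩
  have hpA : ‖p - a₁‖ = ‖p - A‖ := hrefl p hpmem
  rw [hpA] at hpeq
  have hdist : dist A p + dist p a₂ = dist A a₂ := by
    rw [Complex.dist_eq, Complex.dist_eq, Complex.dist_eq, norm_sub_rev A p, hAr]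
    exact hpeq
  have hseg : p ∈ segment ℝ A a₂ := (dist_add_dist_eq_iff.mp hdist).mem_segment
  obtain ⟨α, β, hα, hβ, hαβ, habp⟩ := hseg
  have hpt : p = A + β • (a₂ - A) := by
    rw [← habp, show α = 1 - β by linarith, sub_smul, one_smul, smul_sub]
    module
  have hfp' : f p = 0 := (hline p).mp hpmem
  rw [hpt, haff A a₂ β] at hfp'
  have hβt : β = t₀ := by
    rw [ht₀, eq_div_iff hden]
    linarith
  rw [hpt, hβt]


/-- Daepp–Gorkin–Mortini: for a canonical Blaschke product of degree 3 with
zeros `0, a₁, a₂`, the lines joining the three preimages of any `λ ∈ ∂𝔻` are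
tangent to the ellipse `|w - a₁| + |w - a₂| = |1 - conj a₁ * a₂|`. -/
theorem daepp_gorkin_mortini (a₁ a₂ : ℂ)
    (ha₁ : ‖a₁‖ < 1) (ha₂ : ‖a₂‖ < 1)
    (B : ℂ → ℂ)
    (hB : ∀ z : ℂ, B z = z * ((z - a₁) / (1 - conj a₁ * z)) *
      ((z - a₂) / (1 - conj a₂ * z)))
    (lam : ℂ) (hlam : ‖lam‖ = 1)
    (w₁ w₂ w₃ : ℂ) (h12 : w₁ ≠ w₂) (h23 : w₂ ≠ w₃) (h13 : w₁ ≠ w₃)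
    (hw : ∀ w ∈ ({w₁, w₂, w₃} : Set ℂ), ‖w‖ = 1 ∧ B w = lam) :
    ∀ v v' : ℂ, v ∈ ({w₁, w₂, w₃} : Set ℂ) → v' ∈ ({w₁, w₂, w₃} : Set ℂ) →
      v ≠ v' →
      (∃! p : ℂ, (∃ s : ℝ, p = v + s • (v' - v)) ∧
        ‖p - a₁‖ + ‖p - a₂‖ = ‖1 - conj a₁ * a₂‖) ∧
      (∀ p : ℂ, (∃ s : ℝ, p = v + s • (v' - v)) →
        ‖1 - conj a₁ * a₂‖ ≤ ‖p - a₁‖ + ‖p - a₂‖) := by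
  -- convert the B-equation into the cleared-denominator cubic equation
  have hcub : ∀ w ∈ ({w₁, w₂, w₃} : Set ℂ),
      w * (w - a₁) * (w - a₂) = lam * ((1 - conj a₁ * w) * (1 - conj a₂ * w)) := by
    intro w hwmem
    obtain ⟨habs, hBw⟩ := hw w hwmem
    have h1 := DGM.denom_ne a₁ w ha₁ habs
    have h2 := DGM.denom_ne a₂ w ha₂ habs
    rw [hB w] at hBw
    rw [← hBw]
    have e1 : (w - a₁) / (1 - conj a₁ * w) * (1 - conj a₁ * w) = w - a₁ := div_mul_cancel₀ _ h1
    have e2 : (w - a₂) / (1 - conj a₂ * w) * (1 - conj a₂ * w) = w - a₂ := div_mul_cancel₀ _ h2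
    linear_combination (-(w * (w - a₁))) * e2 +
      (-(w * ((w - a₂) / (1 - conj a₂ * w)) * (1 - conj a₂ * w))) * e1
  have ha1 : ‖w₁‖ = 1 := (hw w₁ (by simp)).1
  have ha2 : ‖w₂‖ = 1 := (hw w₂ (by simp)).1
  have ha3 : ‖w₃‖ = 1 := (hw w₃ (by simp)).1
  have hc1 := hcub w₁ (by simp)
  have hc2 := hcub w₂ (by simp)
  have hc3 := hcub w₃ (by simp)
  intro v v' hv hv' hne
  rcases hv with rfl | rfl | rfl <;> rcases hv' with rfl | rfl | rfl
  · exact absurd rfl hne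
  · exact DGM.master a₁ a₂ ha₁ ha₂ lam v v' w₃ h12 h13 h23 ha1 ha2 ha3 hc1 hc2 hc3
  · exact DGM.master a₁ a₂ ha₁ ha₂ lam v v' w₂ h13 h12 h23.symm ha1 ha3 ha2 hc1 hc3 hc2
  · exact DGM.master a₁ a₂ ha₁ ha₂ lam v v' w₃ h12.symm h23 h13 ha2 ha1 ha3 hc2 hc1 hc3
  · exact absurd rfl hne
  · exact DGM.master a₁ a₂ ha₁ ha₂ lam v v' w₁ h23 h12.symm h13.symm ha2 ha3 ha1 hc2 hc3 hc1
  · exact DGM.master a₁ a₂ ha₁ ha₂ lam v v' w₂ h13.symm h23.symm h12 ha3 ha1 ha2 hc3 hc1 hc2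
  · exact DGM.master a₁ a₂ ha₁ ha₂ lam v v' w₁ h23.symm h13.symm h12.symm ha3 ha2 ha1 hc3 hc2 hc1
  · exact absurd rfl hne
end

section
/- Let f₁ ≠ f₂ ∈ ℂ and r > |f₁ - f₂|, and suppose the ellipse {z : |z - f₁| + |z - f₂| = r} coincides with the zero set of conj(u) z² + p z conj(z) + u conj(z)² + conj(v) z + v conj(z) + q where p, q ∈ ℝ, u, v ∈ ℂ, p² - 4|u|² > 0. Then f₁ and f₂ are the two solutions of the quadratic (4 u conj(u) - p²) ζ² + (4 u conj(v) - 2 p v) ζ + 4 q u - v² = 0. -/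
open Complex ComplexConjugate

/-- If the ellipse `|z - f₁| + |z - f₂| = r` coincides with the zero set of the
general conic form, then the foci are the solutions of the stated quadratic. -/
theorem foci_of_general_form (f₁ f₂ : ℂ) (r : ℝ) (hne : f₁ ≠ f₂)
    (hr : ‖f₁ - f₂‖ < r) (p q : ℝ) (u v : ℂ)
    (hell : p ^ 2 - 4 * ‖u‖ ^ 2 > 0)
    (hset : {z : ℂ | ‖z - f₁‖ + ‖z - f₂‖ = r} =
      {z : ℂ | conj u * z ^ 2 + (p : ℂ) * z * conj z + u * (conj z) ^ 2 +
        conj v * z + v * conj z + (q : ℂ) = 0}) :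
    ∀ ζ ∈ ({f₁, f₂} : Set ℂ),
      (4 * u * conj u - (p : ℂ) ^ 2) * ζ ^ 2 +
        (4 * u * conj v - 2 * (p : ℂ) * v) * ζ + 4 * (q : ℂ) * u - v ^ 2 = 0 := by
  rw [Set.ext_iff] at hset
  set t : ℝ := ‖f₂ - f₁‖ with htdef
  have ht0 : 0 < t := by rw [htdef]; exact norm_pos_iff.mpr (sub_ne_zero.mpr hne.symm)
  have htr : t < r := by rwa [norm_sub_rev, ← htdef] at hr
  have hr0 : 0 < r := ht0.trans htr
  have hrt2 : 0 < r ^ 2 - t ^ 2 := by nlinarith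
  set w : ℝ := Real.sqrt (r ^ 2 - t ^ 2) with hwdef
  have hw0 : 0 < w := Real.sqrt_pos.mpr hrt2
  have hwsq : w ^ 2 = r ^ 2 - t ^ 2 := by rw [hwdef]; exact Real.sq_sqrt hrt2.le
  have htne : (t : ℂ) ≠ 0 := Complex.ofReal_ne_zero.mpr ht0.ne'
  set e : ℂ := (f₂ - f₁) / (t : ℂ) with hedef
  have he : (t : ℂ) * e = f₂ - f₁ := by rw [hedef]; field_simp
  have habse : ‖e‖ = 1 := by
    rw [hedef, norm_div, Complex.norm_real, Real.norm_eq_abs, abs_of_pos ht0, ← htdef, div_self ht0.ne']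
  have hee : e * conj e = 1 := by
    rw [Complex.mul_conj, Complex.normSq_eq_norm_sq, habse]; norm_num
  set c : ℂ := (f₁ + f₂) / 2 with hcdef
  have hf1 : 2 * f₁ = 2 * c - (t : ℂ) * e := by rw [hcdef, he]; ring
  have hf2 : 2 * f₂ = 2 * c + (t : ℂ) * e := by rw [hcdef, he]; ring
  have hwc : (w : ℂ) ^ 2 = (r : ℂ) ^ 2 - (t : ℂ) ^ 2 := by exact_mod_cast hwsq
  have hI : Complex.I ^ 2 = -1 := Complex.I_sq
  have habsxy : ∀ x y s : ℝ, 0 ≤ s → x ^ 2 + y ^ 2 = s ^ 2 →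
      ‖((x : ℂ) + (y : ℂ) * Complex.I) * e‖ = s := by
    intro x y s hs hxy
    rw [norm_mul, habse, mul_one, Complex.norm_add_mul_I, hxy, Real.sqrt_sq hs]
  have hmem : ∀ z : ℂ, ∀ x₁ y₁ s₁ x₂ y₂ s₂ : ℝ, 0 ≤ s₁ → 0 ≤ s₂ →
      x₁ ^ 2 + y₁ ^ 2 = s₁ ^ 2 → x₂ ^ 2 + y₂ ^ 2 = s₂ ^ 2 → s₁ + s₂ = r →
      z - f₁ = ((x₁ : ℂ) + (y₁ : ℂ) * Complex.I) * e →
      z - f₂ = ((x₂ : ℂ) + (y₂ : ℂ) * Complex.I) * e →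
      conj u * z ^ 2 + (p : ℂ) * z * conj z + u * (conj z) ^ 2 +
        conj v * z + v * conj z + (q : ℂ) = 0 := by
    intro z x₁ y₁ s₁ x₂ y₂ s₂ hs₁ hs₂ hxy₁ hxy₂ hsum hz₁ hz₂
    have hm : z ∈ {z : ℂ | ‖z - f₁‖ + ‖z - f₂‖ = r} := by
      simp only [Set.mem_setOf_eq]
      rw [hz₁, hz₂, habsxy x₁ y₁ s₁ hs₁ hxy₁, habsxy x₂ y₂ s₂ hs₂ hxy₂, hsum]
    simpa only [Set.mem_setOf_eq] using (hset z).mp hm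
  -- the five points
  have h1 := hmem (c + ((r / 2 : ℝ) : ℂ) * e) ((r + t) / 2) 0 ((r + t) / 2)
      ((r - t) / 2) 0 ((r - t) / 2) (by linarith) (by linarith) (by ring) (by ring)
      (by ring) (by push_cast; linear_combination (-(1 : ℂ) / 2) * hf1)
      (by push_cast; linear_combination (-(1 : ℂ) / 2) * hf2)
  have h2 := hmem (c + ((-(r / 2) : ℝ) : ℂ) * e) ((t - r) / 2) 0 ((r - t) / 2)
      ((-(r + t)) / 2) 0 ((r + t) / 2) (by linarith) (by linarith) (by ring) (by ring)
      (by ring) (by push_cast; linear_combination (-(1 : ℂ) / 2) * hf1)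
      (by push_cast; linear_combination (-(1 : ℂ) / 2) * hf2)
  have h3 := hmem (c + ((w / 2 : ℝ) : ℂ) * Complex.I * e) (t / 2) (w / 2) (r / 2)
      (-(t / 2)) (w / 2) (r / 2) (by linarith) (by linarith)
      (by linear_combination (1 / 4 : ℝ) * hwsq) (by linear_combination (1 / 4 : ℝ) * hwsq)
      (by ring) (by push_cast; linear_combination (-(1 : ℂ) / 2) * hf1)
      (by push_cast; linear_combination (-(1 : ℂ) / 2) * hf2)
  have h4 := hmem (c + ((-(w / 2) : ℝ) : ℂ) * Complex.I * e) (t / 2) (-(w / 2)) (r / 2)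
      (-(t / 2)) (-(w / 2)) (r / 2) (by linarith) (by linarith)
      (by linear_combination (1 / 4 : ℝ) * hwsq) (by linear_combination (1 / 4 : ℝ) * hwsq)
      (by ring) (by push_cast; linear_combination (-(1 : ℂ) / 2) * hf1)
      (by push_cast; linear_combination (-(1 : ℂ) / 2) * hf2)
  have h5 := hmem (c + (((3 * r / 10 : ℝ) : ℂ) + ((2 * w / 5 : ℝ) : ℂ) * Complex.I) * e)
      (t / 2 + 3 * r / 10) (2 * w / 5) ((5 * r + 3 * t) / 10)
      (3 * r / 10 - t / 2) (2 * w / 5) ((5 * r - 3 * t) / 10) (by linarith) (by linarith)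
      (by linear_combination (4 / 25 : ℝ) * hwsq) (by linear_combination (4 / 25 : ℝ) * hwsq)
      (by ring) (by push_cast; linear_combination (-(1 : ℂ) / 2) * hf1)
      (by push_cast; linear_combination (-(1 : ℂ) / 2) * hf2)
  -- expand the conjugates of the five points
  have hc1 : conj (c + ((r / 2 : ℝ) : ℂ) * e) = conj c + ((r / 2 : ℝ) : ℂ) * conj e := by
    simp only [map_add, map_mul, Complex.conj_ofReal]
  have hc2 : conj (c + ((-(r / 2) : ℝ) : ℂ) * e) = conj c + ((-(r / 2) : ℝ) : ℂ) * conj e := by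
    simp only [map_add, map_mul, Complex.conj_ofReal]
  have hc3 : conj (c + ((w / 2 : ℝ) : ℂ) * Complex.I * e) =
      conj c + ((w / 2 : ℝ) : ℂ) * (-Complex.I) * conj e := by
    simp only [map_add, map_mul, Complex.conj_ofReal, Complex.conj_I]
  have hc4 : conj (c + ((-(w / 2) : ℝ) : ℂ) * Complex.I * e) =
      conj c + ((-(w / 2) : ℝ) : ℂ) * (-Complex.I) * conj e := by
    simp only [map_add, map_mul, Complex.conj_ofReal, Complex.conj_I]
  have hc5 : conj (c + (((3 * r / 10 : ℝ) : ℂ) + ((2 * w / 5 : ℝ) : ℂ) * Complex.I) * e) =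
      conj c + (((3 * r / 10 : ℝ) : ℂ) + ((2 * w / 5 : ℝ) : ℂ) * (-Complex.I)) * conj e := by
    simp only [map_add, map_mul, Complex.conj_ofReal, Complex.conj_I]
  rw [hc1] at h1
  rw [hc2] at h2
  rw [hc3] at h3
  rw [hc4] at h4
  rw [hc5] at h5
  push_cast at h1 h2 h3 h4 h5
  -- eliminate the linear coefficients
  have hre : (r : ℂ) * ((2 * conj u * c + (p : ℂ) * conj c + conj v) * e +
      (2 * u * conj c + (p : ℂ) * c + v) * conj e) = 0 := by
    linear_combination h1 - h2
  have hAB : (2 * conj u * c + (p : ℂ) * conj c + conj v) * e +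
      (2 * u * conj c + (p : ℂ) * c + v) * conj e = 0 :=
    (mul_eq_zero.mp hre).resolve_left (Complex.ofReal_ne_zero.mpr hr0.ne')
  have hwi : (w : ℂ) * (Complex.I * ((2 * conj u * c + (p : ℂ) * conj c + conj v) * e -
      (2 * u * conj c + (p : ℂ) * c + v) * conj e)) = 0 := by
    linear_combination h3 - h4
  have hAB2 : (2 * conj u * c + (p : ℂ) * conj c + conj v) * e -
      (2 * u * conj c + (p : ℂ) * c + v) * conj e = 0 :=
    (mul_eq_zero.mp ((mul_eq_zero.mp hwi).resolve_left
      (Complex.ofReal_ne_zero.mpr hw0.ne'))).resolve_left Complex.I_ne_zero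
  have hBeb : (2 * u * conj c + (p : ℂ) * c + v) * conj e = 0 := by
    linear_combination (1 / 2 : ℂ) * hAB - (1 / 2 : ℂ) * hAB2
  have hB : 2 * u * conj c + (p : ℂ) * c + v = 0 := by
    linear_combination e * hBeb - (2 * u * conj c + (p : ℂ) * c + v) * hee
  have hAe : (2 * conj u * c + (p : ℂ) * conj c + conj v) * e = 0 := by
    linear_combination (1 / 2 : ℂ) * hAB + (1 / 2 : ℂ) * hAB2
  have hA : 2 * conj u * c + (p : ℂ) * conj c + conj v = 0 := by
    linear_combination conj e * hAe - (2 * conj u * c + (p : ℂ) * conj c + conj v) * hee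
  -- symmetric sums
  have hS1 : 4 * (conj u * c ^ 2 + (p : ℂ) * c * conj c + u * (conj c) ^ 2 + conj v * c +
      v * conj c + (q : ℂ)) + (r : ℂ) ^ 2 * (conj u * e ^ 2 + (p : ℂ) * e * conj e +
      u * (conj e) ^ 2) = 0 := by
    linear_combination 2 * h1 + 2 * h2
  have hS3 : 4 * (conj u * c ^ 2 + (p : ℂ) * c * conj c + u * (conj c) ^ 2 + conj v * c +
      v * conj c + (q : ℂ)) + (w : ℂ) ^ 2 * (-(conj u * e ^ 2) + (p : ℂ) * e * conj e -
      u * (conj e) ^ 2) = 0 := by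
    linear_combination 2 * h3 + 2 * h4 + (-((conj e) ^ 2 * (w : ℂ) ^ 2 * u) +
      e * conj e * (w : ℂ) ^ 2 * (p : ℂ) - e ^ 2 * (w : ℂ) ^ 2 * conj u) * hI
  have hE1 : (2 * (r : ℂ) ^ 2 - (t : ℂ) ^ 2) * (conj u * e ^ 2 + u * (conj e) ^ 2) +
      (t : ℂ) ^ 2 * (p : ℂ) = 0 := by
    linear_combination hS1 - hS3 + (-((conj e) ^ 2 * u) + e * conj e * (p : ℂ) -
      e ^ 2 * conj u) * hwc + (-((t : ℂ) ^ 2 * (p : ℂ))) * hee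
  have hE3' : (w : ℂ) * (Complex.I * ((r : ℂ) * (conj u * e ^ 2 - u * (conj e) ^ 2))) = 0 := by
    linear_combination (100 / 24 : ℂ) * h5 - (25 / 24 : ℂ) * hS1 + (16 / 24 : ℂ) * hE1 +
      ((-16 * ((conj e) ^ 2 * (w : ℂ) ^ 2 * u) + 16 * e * conj e * (w : ℂ) ^ 2 * (p : ℂ) -
        16 * e ^ 2 * (w : ℂ) ^ 2 * conj u) / 24) * hI +
      ((16 * (conj e) ^ 2 * u - 16 * e * conj e * (p : ℂ) + 16 * e ^ 2 * conj u) / 24) * hwc +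
      ((16 * (t : ℂ) ^ 2 * (p : ℂ)) / 24) * hee -
      (((30 * (r : ℂ) + 40 * (w : ℂ) * Complex.I) * e) / 24) * hA -
      (((30 * (r : ℂ) - 40 * (w : ℂ) * Complex.I) * conj e) / 24) * hB
  have hE3 : conj u * e ^ 2 = u * (conj e) ^ 2 := by
    have h' := (mul_eq_zero.mp ((mul_eq_zero.mp ((mul_eq_zero.mp hE3').resolve_left
      (Complex.ofReal_ne_zero.mpr hw0.ne'))).resolve_left
      Complex.I_ne_zero)).resolve_left (Complex.ofReal_ne_zero.mpr hr0.ne')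
    linear_combination h'
  have hu : 2 * (2 * (r : ℂ) ^ 2 - (t : ℂ) ^ 2) * u = -((p : ℂ) * (t : ℂ) ^ 2 * e ^ 2) := by
    linear_combination e ^ 2 * hE1 - (2 * (r : ℂ) ^ 2 - (t : ℂ) ^ 2) * e ^ 2 * hE3 +
      ((2 * (t : ℂ) ^ 2 - 4 * (r : ℂ) ^ 2) * u * (1 + e * conj e)) * hee
  have hub : 2 * (2 * (r : ℂ) ^ 2 - (t : ℂ) ^ 2) * conj u =
      -((p : ℂ) * (t : ℂ) ^ 2 * (conj e) ^ 2) := by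
    linear_combination (conj e) ^ 2 * hE1 + (2 * (r : ℂ) ^ 2 - (t : ℂ) ^ 2) * (conj e) ^ 2 * hE3 +
      ((2 * (t : ℂ) ^ 2 - 4 * (r : ℂ) ^ 2) * conj u * (1 + e * conj e)) * hee
  have hq : 2 * (2 * (r : ℂ) ^ 2 - (t : ℂ) ^ 2) * (q : ℂ) =
      2 * (2 * (r : ℂ) ^ 2 - (t : ℂ) ^ 2) * (conj u * c ^ 2 + u * (conj c) ^ 2 +
        (p : ℂ) * c * conj c) - (p : ℂ) * (r : ℂ) ^ 2 * (w : ℂ) ^ 2 := by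
    linear_combination ((2 * (r : ℂ) ^ 2 - (t : ℂ) ^ 2) / 2) * hS1 -
      (2 * (2 * (r : ℂ) ^ 2 - (t : ℂ) ^ 2)) * c * hA -
      (2 * (2 * (r : ℂ) ^ 2 - (t : ℂ) ^ 2)) * conj c * hB -
      ((r : ℂ) ^ 2 / 4) * (conj e) ^ 2 * hu - ((r : ℂ) ^ 2 / 4) * e ^ 2 * hub +
      ((r : ℂ) ^ 2 * (p : ℂ)) * hwc +
      (-((r : ℂ) ^ 4 * (p : ℂ)) + (t : ℂ) ^ 2 * (r : ℂ) ^ 2 * (p : ℂ) +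
        (1 / 2 : ℂ) * e * conj e * (t : ℂ) ^ 2 * (r : ℂ) ^ 2 * (p : ℂ)) * hee
  -- conclude
  have hKne : (2 * (2 * (r : ℂ) ^ 2 - (t : ℂ) ^ 2)) ≠ 0 := by
    have hh : (2 * (2 * r ^ 2 - t ^ 2) : ℝ) ≠ 0 := by nlinarith
    have hcast : ((2 * (2 * r ^ 2 - t ^ 2) : ℝ) : ℂ) = 2 * (2 * (r : ℂ) ^ 2 - (t : ℂ) ^ 2) := by
      push_cast; ring
    rw [← hcast]
    exact Complex.ofReal_ne_zero.mpr hh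
  intro ζ hζ
  simp only [Set.mem_insert_iff, Set.mem_singleton_iff] at hζ
  have hz2 : (ζ - c) ^ 2 = (t : ℂ) ^ 2 * e ^ 2 / 4 := by
    rcases hζ with rfl | rfl
    · linear_combination ((ζ - c) / 2 - (t : ℂ) * e / 4) * hf1
    · linear_combination ((ζ - c) / 2 + (t : ℂ) * e / 4) * hf2
  have hbig : (2 * (2 * (r : ℂ) ^ 2 - (t : ℂ) ^ 2)) ^ 2 *
      ((4 * u * conj u - (p : ℂ) ^ 2) * ζ ^ 2 +
        (4 * u * conj v - 2 * (p : ℂ) * v) * ζ + 4 * (q : ℂ) * u - v ^ 2) = 0 := by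
    linear_combination
      ((2 * (2 * (r : ℂ) ^ 2 - (t : ℂ) ^ 2)) ^ 2 * (4 * u * conj u - (p : ℂ) ^ 2)) * hz2 +
      ((t : ℂ) ^ 2 * e ^ 2 * (2 * (2 * (r : ℂ) ^ 2 - (t : ℂ) ^ 2)) * conj u -
        4 * (p : ℂ) * (r : ℂ) ^ 2 * (w : ℂ) ^ 2) * hu +
      (-((p : ℂ) * (t : ℂ) ^ 4 * e ^ 4)) * hub +
      ((p : ℂ) ^ 2 * (t : ℂ) ^ 6 * e ^ 2 * (e * conj e + 1)) * hee +
      (4 * (p : ℂ) ^ 2 * (t : ℂ) ^ 2 * e ^ 2 * (r : ℂ) ^ 2) * hwc +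
      (4 * u * (2 * (2 * (r : ℂ) ^ 2 - (t : ℂ) ^ 2))) * hq +
      (4 * u * ζ * (2 * (2 * (r : ℂ) ^ 2 - (t : ℂ) ^ 2)) ^ 2) * hA +
      (-2 * (p : ℂ) * ζ * (2 * (2 * (r : ℂ) ^ 2 - (t : ℂ) ^ 2)) ^ 2 -
        (2 * (2 * (r : ℂ) ^ 2 - (t : ℂ) ^ 2)) ^ 2 * (v - 2 * u * conj c - (p : ℂ) * c)) * hB
  exact (mul_eq_zero.mp hbig).resolve_left (pow_ne_zero 2 hKne)
end

section
/- Let f₁ ≠ f₂ ∈ ℂ and r > |f₁ - f₂|, and suppose the ellipse {z : |z - f₁| + |z - f₂| = r} is the zero set of conj(u) z² + p z conj(z) + u conj(z)² + conj(v) z + v conj(z) + q with p, q ∈ ℝ, u ≠ 0, p² - 4|u|² > 0. Then r = (1/2)|f₁ - f₂| √(2 + |p/u|). -/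
open Complex ComplexConjugate

private lemma subst_id (u v : ℂ) (p q : ℝ) (c₀ d w : ℂ) (hd : d * conj d = 1) :
    conj u * (c₀ + w*d)^2 + (p:ℂ)*(c₀+w*d)*conj (c₀+w*d) + u*(conj (c₀+w*d))^2 +
      conj v*(c₀+w*d) + v*conj (c₀+w*d) + (q:ℂ)
    = conj (u * (conj d)^2) * w^2 + (p:ℂ)*w*conj w + (u*(conj d)^2)*(conj w)^2
      + conj (2*u*conj c₀*conj d + (p:ℂ)*c₀*conj d + v*conj d) * w
      + (2*u*conj c₀*conj d + (p:ℂ)*c₀*conj d + v*conj d)*conj w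
      + (conj u*c₀^2 + (p:ℂ)*c₀*conj c₀ + u*(conj c₀)^2 + conj v*c₀ + v*conj c₀ + (q:ℂ)) := by
  simp only [map_add, map_mul, map_pow, map_ofNat, Complex.conj_conj, Complex.conj_ofReal]
  linear_combination ((p:ℂ)*w*conj w) * hd

def Gf (p : ℝ) (U V Q w : ℂ) : Prop :=
  conj U * w^2 + (p:ℂ)*w*conj w + U*(conj w)^2 + conj V*w + V*conj w + Q = 0

lemma key (a b p : ℝ) (ha : 0 < a) (hb : 0 < b) (hba : b < a) (hp : p ≠ 0) (U V Q : ℂ)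
    (h1 : Gf p U V Q (a:ℂ)) (h2 : Gf p U V Q (-(a:ℂ)))
    (h3 : Gf p U V Q (I*(b:ℂ))) (h4 : Gf p U V Q (-(I*(b:ℂ))))
    (h5 : Gf p U V Q (((a:ℂ) + I*b) * ((Real.sqrt 2 / 2 : ℝ):ℂ))) :
    ‖(p:ℂ)/U‖ = 2*(a^2+b^2)/(a^2-b^2) := by
  unfold Gf at h1 h2 h3 h4 h5
  simp only [map_mul, map_neg, map_add, Complex.conj_ofReal, Complex.conj_I, map_ofNat,
    Complex.conj_conj] at h1 h2 h3 h4 h5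
  have haC : (a:ℂ) ≠ 0 := Complex.ofReal_ne_zero.mpr ha.ne'
  have hbC : (b:ℂ) ≠ 0 := Complex.ofReal_ne_zero.mpr hb.ne'
  have hs : ((Real.sqrt 2 / 2 : ℝ):ℂ)^2 = 1/2 := by
    have : (Real.sqrt 2)^2 = 2 := Real.sq_sqrt (by norm_num)
    push_cast
    rw [div_pow]
    norm_cast
    rw [this]; norm_num
  have e1 : (conj V + V) * (2*(a:ℂ)) = 0 := by linear_combination h1 - h2
  have s1 : conj V + V = 0 := by
    rcases mul_eq_zero.mp e1 with h | h
    · exact h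
    · exact absurd h (by simp [haC])
  have e2 : (conj V - V) * (2*I*(b:ℂ)) = 0 := by linear_combination h3 - h4
  have s2 : conj V - V = 0 := by
    rcases mul_eq_zero.mp e2 with h | h
    · exact h
    · exact absurd h (by simp [hbC, Complex.I_ne_zero])
  have hV : V = 0 := by linear_combination (s1 - s2)/2
  have hA : (conj U + U + p) * (a:ℂ)^2 + Q = 0 := by linear_combination (h1 + h2)/2
  have hB : ((p:ℂ) - conj U - U) * (b:ℂ)^2 + Q = 0 := by
    linear_combination (h3 + h4)/2 + ((p:ℂ) - conj U - U) * (b:ℂ)^2 * Complex.I_sq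
  simp only [hV, map_zero, zero_mul, mul_zero, add_zero, zero_add] at h5
  have h5' : conj U * ((a:ℂ)+I*b)^2 + (p:ℂ)*((a:ℂ)+I*b)*((a:ℂ)-I*b) + U*((a:ℂ)-I*b)^2
      + 2*Q = 0 := by
    linear_combination 2*h5 - 2*(conj U * ((a:ℂ)+I*b)^2 + (p:ℂ)*((a:ℂ)+I*b)*((a:ℂ)-I*b)
      + U*((a:ℂ)-I*b)^2) * hs
  have e3 : (conj U - U) * (2*I*(a:ℂ)*b) = 0 := by
    linear_combination h5' - hA - hB + ((p:ℂ) - conj U - U)*(b:ℂ)^2*Complex.I_sq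
  have s3 : conj U - U = 0 := by
    rcases mul_eq_zero.mp e3 with h | h
    · exact h
    · exact absurd h (by simp [haC, hbC, Complex.I_ne_zero])
  have s3' : conj U = U := sub_eq_zero.mp s3
  have hUre : ((U.re:ℝ):ℂ) = U := Complex.conj_eq_iff_re.mp s3'
  have hC : ((2*(U.re:ℂ)+p)*(a:ℂ)^2 - ((p:ℂ)-2*U.re)*(b:ℂ)^2 : ℂ) = 0 := by
    linear_combination hA - hB + 2*((a:ℂ)^2+(b:ℂ)^2)*hUre - ((a:ℂ)^2+(b:ℂ)^2)*s3
  have hxR : (2*U.re+p)*a^2 - (p-2*U.re)*b^2 = 0 := by exact_mod_cast hC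
  have hBpos : (0:ℝ) < a^2 - b^2 := by nlinarith
  have hApos : (0:ℝ) < a^2 + b^2 := by positivity
  have hx : U.re ≠ 0 := by
    intro h0
    apply hp
    have hpz : p*(a^2-b^2) = 0 := by rw [h0] at hxR; linarith
    rcases mul_eq_zero.mp hpz with h | h
    · exact h
    · exact absurd h hBpos.ne'
  have habs : 2 * |U.re| * (a^2+b^2) = |p| * (a^2-b^2) := by
    have h2 : 2*U.re*(a^2+b^2) = -p*(a^2-b^2) := by linarith
    calc 2 * |U.re| * (a^2+b^2) = |2*U.re*(a^2+b^2)| := by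
          rw [abs_mul, abs_mul, abs_of_pos hApos, (by norm_num : |(2:ℝ)| = 2)]
      _ = |-p*(a^2-b^2)| := by rw [h2]
      _ = |p| * (a^2-b^2) := by rw [abs_mul, abs_neg, abs_of_pos hBpos]
  rw [← hUre, norm_div, Complex.norm_real, Real.norm_eq_abs, Complex.norm_real, Real.norm_eq_abs]
  have hxpos : 0 < |U.re| := abs_pos.mpr hx
  field_simp
  nlinarith [habs]

set_option maxHeartbeats 1000000 in
/-- If the ellipse `|z - f₁| + |z - f₂| = r` is the zero set of the general
conic form (with `u ≠ 0`), then `r = (1/2)|f₁ - f₂| √(2 + |p/u|)`. -/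
theorem sum_of_general_form (f₁ f₂ : ℂ) (r : ℝ) (hne : f₁ ≠ f₂)
    (hr : ‖f₁ - f₂‖ < r) (p q : ℝ) (u v : ℂ) (hu : u ≠ 0)
    (hell : p ^ 2 - 4 * ‖u‖ ^ 2 > 0)
    (hset : {z : ℂ | ‖z - f₁‖ + ‖z - f₂‖ = r} =
      {z : ℂ | conj u * z ^ 2 + (p : ℂ) * z * conj z + u * (conj z) ^ 2 +
        conj v * z + v * conj z + (q : ℂ) = 0}) :
    r = (1 / 2) * ‖f₁ - f₂‖ *
      Real.sqrt (2 + ‖(p : ℂ) / u‖) := by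
  have hp0 : p ≠ 0 := by
    intro h; rw [h] at hell; nlinarith [norm_nonneg u, hell]
  have hmr : ‖f₂ - f₁‖ = ‖f₁ - f₂‖ := norm_sub_rev f₂ f₁
  obtain ⟨m, hm_def⟩ : ∃ m : ℝ, m = ‖f₂ - f₁‖ := ⟨_, rfl⟩
  have hm : 0 < m := by
    rw [hm_def]; exact norm_pos_iff.mpr (sub_ne_zero.mpr hne.symm)
  obtain ⟨a, ha_def⟩ : ∃ a : ℝ, a = r/2 := ⟨_, rfl⟩
  obtain ⟨c, hc_def⟩ : ∃ c : ℝ, c = m/2 := ⟨_, rfl⟩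
  have hca : c < a := by rw [hc_def, ha_def]; rw [hm_def, hmr]; linarith
  have hc : 0 < c := by rw [hc_def]; linarith
  have ha : 0 < a := lt_trans hc hca
  obtain ⟨b, hb_def⟩ : ∃ b : ℝ, b = Real.sqrt (a^2 - c^2) := ⟨_, rfl⟩
  have hb2 : b^2 = a^2 - c^2 := by rw [hb_def]; exact Real.sq_sqrt (by nlinarith)
  have hb : 0 < b := by rw [hb_def]; exact Real.sqrt_pos.mpr (by nlinarith)
  have hba : b < a := by nlinarith
  obtain ⟨d, hd_def⟩ : ∃ d : ℂ, d = (f₂ - f₁) / (m:ℂ) := ⟨_, rfl⟩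
  have hd1 : ‖d‖ = 1 := by
    rw [hd_def, norm_div, Complex.norm_real, Real.norm_eq_abs, ← hm_def, abs_of_pos hm]
    exact div_self hm.ne' 
  have hdd : d * conj d = 1 := by
    rw [Complex.mul_conj, Complex.normSq_eq_norm_sq, hd1]; norm_num
  obtain ⟨c₀, hc₀_def⟩ : ∃ c₀ : ℂ, c₀ = (f₁ + f₂)/2 := ⟨_, rfl⟩
  have hmC : (m:ℂ) ≠ 0 := Complex.ofReal_ne_zero.mpr hm.ne'
  have hcd : (c:ℂ)*d = (f₂ - f₁)/2 := by
    rw [hc_def, hd_def]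
    push_cast
    field_simp
  have hf₁ : f₁ = c₀ - (c:ℂ)*d := by rw [hcd, hc₀_def]; ring
  have hf₂ : f₂ = c₀ + (c:ℂ)*d := by rw [hcd, hc₀_def]; ring
  have main : ∀ w : ℂ, ‖w + (c:ℂ)‖ + ‖w - (c:ℂ)‖ = r →
      Gf p (u * (conj d)^2) (2*u*conj c₀*conj d + (p:ℂ)*c₀*conj d + v*conj d)
        (conj u*c₀^2 + (p:ℂ)*c₀*conj c₀ + u*(conj c₀)^2 + conj v*c₀ + v*conj c₀ + (q:ℂ)) w := by
    intro w hw
    have hz : (c₀ + w*d) ∈ {z : ℂ | ‖z - f₁‖ + ‖z - f₂‖ = r} := by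
      have e₁ : c₀ + w*d - f₁ = (w + c)*d := by rw [hf₁]; ring
      have e₂ : c₀ + w*d - f₂ = (w - c)*d := by rw [hf₂]; ring
      simp only [Set.mem_setOf_eq, e₁, e₂, norm_mul, hd1, mul_one]
      exact hw
    rw [hset] at hz
    have hz' : conj u * (c₀ + w*d)^2 + (p:ℂ)*(c₀+w*d)*conj (c₀+w*d) +
        u*(conj (c₀+w*d))^2 + conj v*(c₀+w*d) + v*conj (c₀+w*d) + (q:ℂ) = 0 := hz
    unfold Gf
    rw [← subst_id u v p q c₀ d w hdd]
    exact hz'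
  have pf1 : ‖(a:ℂ) + (c:ℂ)‖ + ‖(a:ℂ) - (c:ℂ)‖ = r := by
    rw [show (a:ℂ)+(c:ℂ) = ((a+c:ℝ):ℂ) by push_cast; ring,
        show (a:ℂ)-(c:ℂ) = ((a-c:ℝ):ℂ) by push_cast; ring,
        Complex.norm_real, Real.norm_eq_abs, Complex.norm_real, Real.norm_eq_abs,
        abs_of_pos (by linarith), abs_of_pos (by linarith)]
    rw [ha_def]; ring
  have pf2 : ‖-(a:ℂ) + (c:ℂ)‖ + ‖-(a:ℂ) - (c:ℂ)‖ = r := by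
    rw [show -(a:ℂ)+(c:ℂ) = ((c-a:ℝ):ℂ) by push_cast; ring,
        show -(a:ℂ)-(c:ℂ) = ((-(a+c):ℝ):ℂ) by push_cast; ring,
        Complex.norm_real, Real.norm_eq_abs, Complex.norm_real, Real.norm_eq_abs,
        abs_of_neg (by linarith), abs_of_neg (by linarith)]
    rw [ha_def]; ring
  have pf3 : ‖I*(b:ℂ) + (c:ℂ)‖ + ‖I*(b:ℂ) - (c:ℂ)‖ = r := by
    rw [show I*(b:ℂ)+(c:ℂ) = ((c:ℝ):ℂ) + ((b:ℝ):ℂ)*I by push_cast; ring,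
        show I*(b:ℂ)-(c:ℂ) = ((-c:ℝ):ℂ) + ((b:ℝ):ℂ)*I by push_cast; ring,
        Complex.norm_add_mul_I, Complex.norm_add_mul_I,
        show c^2 + b^2 = a^2 by linear_combination hb2, show (-c)^2 + b^2 = a^2 by linear_combination hb2,
        Real.sqrt_sq ha.le]
    rw [ha_def]; ring
  have pf4 : ‖-(I*(b:ℂ)) + (c:ℂ)‖ + ‖-(I*(b:ℂ)) - (c:ℂ)‖ = r := by
    rw [show -(I*(b:ℂ))+(c:ℂ) = ((c:ℝ):ℂ) + ((-b:ℝ):ℂ)*I by push_cast; ring,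
        show -(I*(b:ℂ))-(c:ℂ) = ((-c:ℝ):ℂ) + ((-b:ℝ):ℂ)*I by push_cast; ring,
        Complex.norm_add_mul_I, Complex.norm_add_mul_I,
        show c^2 + (-b)^2 = a^2 by linear_combination hb2, show (-c)^2 + (-b)^2 = a^2 by linear_combination hb2,
        Real.sqrt_sq ha.le]
    rw [ha_def]; ring
  have hs0 : 0 < Real.sqrt 2 / 2 := by positivity
  have hs2 : (Real.sqrt 2 / 2)^2 = 1/2 := by
    rw [div_pow, Real.sq_sqrt (by norm_num : (0:ℝ) ≤ 2)]; norm_num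
  have hs1 : Real.sqrt 2 / 2 < 1 := by nlinarith
  have pf5 : ‖((a:ℂ) + I*(b:ℂ)) * ((Real.sqrt 2 / 2 : ℝ):ℂ) + (c:ℂ)‖ +
      ‖((a:ℂ) + I*(b:ℂ)) * ((Real.sqrt 2 / 2 : ℝ):ℂ) - (c:ℂ)‖ = r := by
    rw [show ((a:ℂ) + I*(b:ℂ)) * ((Real.sqrt 2 / 2 : ℝ):ℂ) + (c:ℂ)
          = ((a*(Real.sqrt 2 / 2)+c:ℝ):ℂ) + ((b*(Real.sqrt 2 / 2):ℝ):ℂ)*I by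
          push_cast; ring,
        show ((a:ℂ) + I*(b:ℂ)) * ((Real.sqrt 2 / 2 : ℝ):ℂ) - (c:ℂ)
          = ((a*(Real.sqrt 2 / 2)-c:ℝ):ℂ) + ((b*(Real.sqrt 2 / 2):ℝ):ℂ)*I by
          push_cast; ring,
        Complex.norm_add_mul_I, Complex.norm_add_mul_I,
        show (a*(Real.sqrt 2 / 2)+c)^2 + (b*(Real.sqrt 2 / 2))^2
            = (a+c*(Real.sqrt 2 / 2))^2 by
          linear_combination (Real.sqrt 2 / 2)^2*hb2 + 2*(a^2-c^2)*hs2,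
        show (a*(Real.sqrt 2 / 2)-c)^2 + (b*(Real.sqrt 2 / 2))^2
            = (a-c*(Real.sqrt 2 / 2))^2 by
          linear_combination (Real.sqrt 2 / 2)^2*hb2 + 2*(a^2-c^2)*hs2,
        Real.sqrt_sq (by nlinarith), Real.sqrt_sq (by nlinarith)]
    rw [ha_def]; ring
  have hkey := key a b p ha hb hba hp0 _ _ _
    (main _ pf1) (main _ pf2) (main _ pf3) (main _ pf4) (main _ pf5)
  have habsU : ‖(p:ℂ)/(u * (conj d)^2)‖ = ‖(p:ℂ)/u‖ := by
    rw [norm_div, norm_div, norm_mul, norm_pow, Complex.norm_conj, hd1]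
    norm_num
  rw [habsU] at hkey
  rw [hkey, ← hmr, ← hm_def]
  have hab2 : a^2 - b^2 = c^2 := by linarith
  rw [show 2 + 2*(a^2+b^2)/(a^2-b^2) = (2*a/c)^2 by
        rw [hab2]; field_simp; nlinarith,
      Real.sqrt_sq (by positivity)]
  rw [show m = 2*c by rw [hc_def]; ring]
  field_simp
  rw [ha_def]; ring
end

section
/- Let B(w) = w ∏_{k=1}^{d-1} (w - a_k)/(1 - conj(a_k) w) be a canonical Blaschke product of degree d with a_k ∈ 𝔻. For λ on the unit circle, let w₁, …, w_d be the d preimages of λ under B on the unit circle, and let ζ = (w₁ + ⋯ + w_d)/d be their centroid. Then |ζ - (a₁ + ⋯ + a_{d-1})/d| = |a₁ ⋯ a_{d-1}|/d. -/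
open Complex ComplexConjugate Polynomial

lemma natDegree_prod_one_sub_le {ι : Type*} (s : Finset ι) (c : ι → ℂ) :
    (∏ i ∈ s, (1 - C (c i) * X)).natDegree ≤ s.card := by
  refine le_trans (Polynomial.natDegree_prod_le s _) ?_
  calc ∑ i ∈ s, (1 - C (c i) * X).natDegree ≤ ∑ _i ∈ s, 1 := by
        refine Finset.sum_le_sum fun i _ => ?_
        refine le_trans (natDegree_sub_le _ _) ?_
        simp
        exact le_trans (natDegree_mul_le) (by simp)
    _ = s.card := by simp

lemma coeff_prod_one_sub {ι : Type*} [DecidableEq ι] (s : Finset ι) (c : ι → ℂ) :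
    (∏ i ∈ s, (1 - C (c i) * X)).coeff s.card = ∏ i ∈ s, (-(c i)) := by
  induction s using Finset.induction_on with
  | empty => simp
  | insert j s h ih =>
    rw [Finset.prod_insert h, Finset.prod_insert h, Finset.card_insert_of_notMem h]
    have hdeg := natDegree_prod_one_sub_le s c
    have hz : (∏ i ∈ s, (1 - C (c i) * X)).coeff (s.card + 1) = 0 :=
      coeff_eq_zero_of_natDegree_lt (by omega)
    rw [sub_mul, one_mul, coeff_sub, hz, mul_assoc, coeff_C_mul, coeff_X_mul, ih]
    ring

/-- The centroid of the `d` preimages of `λ ∈ ∂𝔻` under a canonical Blaschke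
product of degree `d = n + 1` with zeros `0, a₁, …, aₙ` lies on the circle with
center `(a₁ + ⋯ + aₙ)/d` and radius `|a₁ ⋯ aₙ|/d`. -/
theorem centroid_circle (n : ℕ) (a : Fin n → ℂ) (ha : ∀ k, ‖a k‖ < 1)
    (lam : ℂ) (hlam : ‖lam‖ = 1) (w : Fin (n + 1) → ℂ)
    (hinj : Function.Injective w)
    (hw : ∀ i, ‖w i‖ = 1 ∧
      w i * ∏ k, (w i - a k) / (1 - conj (a k) * w i) = lam) :
    ‖(∑ i, w i) / (n + 1) - (∑ k, a k) / (n + 1)‖ =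
      ‖∏ k, a k‖ / (n + 1) := by
  classical
  set A : ℂ[X] := X * ∏ k, (X - C (a k)) with hA
  set B : ℂ[X] := C lam * ∏ k, (1 - C (conj (a k)) * X) with hB
  set P : ℂ[X] := A - B with hP
  set Q : ℂ[X] := ∏ i, (X - C (w i)) with hQ
  have hAm : A.Monic := (monic_X).mul (monic_prod_of_monic _ _ fun k _ => monic_X_sub_C _)
  have hprodm : (∏ k, (X - C (a k))).Monic := monic_prod_of_monic _ _ fun k _ => monic_X_sub_C _
  have h1 : (∏ k, (X - C (a k))).natDegree = n := by
    rw [Polynomial.natDegree_prod _ _ fun k _ => X_sub_C_ne_zero (a k)]; simp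
  have hAdeg : A.natDegree = n + 1 := by
    rw [hA, (monic_X).natDegree_mul hprodm, natDegree_X, h1]; omega
  have hBdeg : B.natDegree ≤ n := by
    refine le_trans natDegree_mul_le ?_
    simpa using natDegree_prod_one_sub_le Finset.univ (fun k => conj (a k))
  have hPm : P.Monic := by
    have hlt : (-B).degree < A.degree := by
      rw [degree_neg, Polynomial.degree_eq_natDegree hAm.ne_zero, hAdeg]
      calc B.degree ≤ (B.natDegree : WithBot ℕ) := degree_le_natDegree
        _ ≤ (n : WithBot ℕ) := by exact_mod_cast hBdeg
        _ < ((n + 1 : ℕ) : WithBot ℕ) := by exact_mod_cast Nat.lt_succ_self n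
    simpa [hP, sub_eq_add_neg] using hAm.add_of_left hlt
  have hPdeg : P.natDegree = n + 1 := by
    rw [hP, ← hAdeg]
    exact natDegree_sub_eq_left_of_natDegree_lt (by omega)
  have hQm : Q.Monic := monic_prod_of_monic _ _ fun i _ => monic_X_sub_C _
  have hQdeg : Q.natDegree = n + 1 := by
    rw [hQ, Polynomial.natDegree_prod _ _ fun i _ => X_sub_C_ne_zero (w i)]; simp
  have hroot : ∀ i, P.eval (w i) = 0 := by
    intro i
    obtain ⟨habs, heq⟩ := hw i
    have hden : ∀ k, 1 - conj (a k) * w i ≠ 0 := by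
      intro k hk
      have h1 : conj (a k) * w i = 1 := by linear_combination -hk
      have := congrArg norm h1
      rw [norm_mul, habs, Complex.norm_conj, norm_one, mul_one] at this
      exact absurd this (ne_of_lt (ha k))
    have hpd : ∏ k, (1 - conj (a k) * w i) ≠ 0 :=
      Finset.prod_ne_zero_iff.2 fun k _ => hden k
    have key : w i * ∏ k, (w i - a k) = lam * ∏ k, (1 - conj (a k) * w i) := by
      rw [Finset.prod_div_distrib] at heq
      rw [mul_div_assoc', div_eq_iff hpd] at heq
      linear_combination heq
    simp only [hP, hA, hB, eval_sub, eval_mul, eval_X, eval_C, eval_prod, eval_sub, eval_one]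
    rw [sub_eq_zero]
    convert key using 2 <;> simp
  have hPQ : P = Q := by
    have hcoeff : (P - Q).coeff (n + 1) = 0 := by
      have h1 : P.coeff (n + 1) = 1 := hPdeg ▸ hPm.coeff_natDegree
      have h2 : Q.coeff (n + 1) = 1 := hQdeg ▸ hQm.coeff_natDegree
      simp [h1, h2]
    have hdlt : (P - Q).natDegree < n + 1 := by
      rcases eq_or_ne (P - Q) 0 with h0 | h0
      · simp [h0]
      · have hle : (P - Q).natDegree ≤ n + 1 :=
          le_trans (natDegree_sub_le _ _) (by simp [hPdeg, hQdeg])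
        rcases lt_or_eq_of_le hle with h | h
        · exact h
        · exact absurd (by rw [leadingCoeff, h]; exact hcoeff) (mt leadingCoeff_eq_zero.mp h0)
    have hz : P - Q = 0 := by
      refine eq_zero_of_natDegree_lt_card_of_eval_eq_zero (P - Q) hinj (fun i => ?_) (by simpa using hdlt)
      rw [eval_sub, hroot i, hQ, eval_prod, Finset.prod_eq_zero (Finset.mem_univ i) (by simp)]
      ring
    exact sub_eq_zero.mp hz
  -- compare coefficients at degree n
  have hQc : Q.coeff n = -∑ i, w i := by
    have h1 := prod_X_sub_C_nextCoeff (s := (Finset.univ : Finset (Fin (n+1)))) w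
    rw [← hQ, nextCoeff_of_natDegree_pos (by omega), hQdeg] at h1
    simpa using h1
  have hAc : A.coeff n = -∑ k, a k := by
    have h1 : A.nextCoeff = -∑ k, a k := by
      have hx : (X : ℂ[X]).nextCoeff = 0 := by simp [nextCoeff]
      rw [hA, Monic.nextCoeff_mul monic_X hprodm, hx, zero_add]
      simpa using prod_X_sub_C_nextCoeff (s := (Finset.univ : Finset (Fin n))) a
    rw [← h1, nextCoeff_of_natDegree_pos (by omega), hAdeg]
    norm_num
  have hBc : B.coeff n = lam * ∏ k, (-(conj (a k))) := by
    rw [hB, coeff_C_mul]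
    congr 1
    have := coeff_prod_one_sub (Finset.univ : Finset (Fin n)) (fun k => conj (a k))
    simpa using this
  have key : ∑ i, w i - ∑ k, a k = lam * ∏ k, (-(conj (a k))) := by
    have h1 : P.coeff n = Q.coeff n := by rw [hPQ]
    rw [hP, coeff_sub, hAc, hBc, hQc] at h1
    linear_combination h1
  -- final computation
  rw [div_sub_div_same, key, norm_div, norm_mul]
  have habsn : ‖(n : ℂ) + 1‖ = (n : ℝ) + 1 := by
    rw [show ((n : ℂ) + 1) = ((n + 1 : ℕ) : ℂ) by push_cast; ring, Complex.norm_natCast]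
    push_cast; ring
  rw [habsn, hlam, one_mul]
  congr 1
  rw [norm_prod, norm_prod]
  exact Finset.prod_congr rfl fun x _ => by rw [norm_neg, Complex.norm_conj]
end

section
/- Let 0 < t < 1 and let ω₁ ≠ ω₂ be points on the unit circle with ω₁ + ω₂ ≠ 0. The tangent lines to the ellipse E_t (defined by t²z² - (1+t⁴)z conj(z) + t² conj(z)² + (1-t²)² = 0) at the points ζ_k = φ_t(ω_k) = (t²ω_k + conj(ω_k))/(1+t²), k = 1,2, intersect at the point z = 2(ω₁ω₂t² + 1)/((t²+1)(ω₁+ω₂)). Moreover, writing w₀ = 2ω₁ω₂/(ω₁+ω₂) for the intersection of the corresponding tangents to the unit circle, this equals z = (t² w₀ + conj(w₀))/(1+t²). -/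
open Complex ComplexConjugate

/-- The tangent lines to the ellipse `E_t` at the images `φ_t(ω₁), φ_t(ω₂)` of
two points of the unit circle intersect exactly at
`z = 2(ω₁ω₂t² + 1)/((t² + 1)(ω₁ + ω₂))`, which equals
`(t²w₀ + conj w₀)/(1 + t²)` for `w₀ = 2ω₁ω₂/(ω₁ + ω₂)`. -/
theorem tangent_lines_ellipse_intersection (t : ℝ) (ht0 : 0 < t) (ht1 : t < 1)
    (ω₁ ω₂ : ℂ) (h₁ : ‖ω₁‖ = 1) (h₂ : ‖ω₂‖ = 1)
    (hne : ω₁ ≠ ω₂) (hsum : ω₁ + ω₂ ≠ 0) :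
    {z : ℂ | (ω₁ ^ 2 - (t : ℂ) ^ 2) * z - ((t : ℂ) ^ 2 * ω₁ ^ 2 - 1) * conj z +
        2 * ((t : ℂ) ^ 2 - 1) * ω₁ = 0} ∩
      {z : ℂ | (ω₂ ^ 2 - (t : ℂ) ^ 2) * z - ((t : ℂ) ^ 2 * ω₂ ^ 2 - 1) * conj z +
        2 * ((t : ℂ) ^ 2 - 1) * ω₂ = 0} =
    {2 * (ω₁ * ω₂ * (t : ℂ) ^ 2 + 1) / (((t : ℂ) ^ 2 + 1) * (ω₁ + ω₂))} ∧
    2 * (ω₁ * ω₂ * (t : ℂ) ^ 2 + 1) / (((t : ℂ) ^ 2 + 1) * (ω₁ + ω₂)) =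
      ((t : ℂ) ^ 2 * (2 * ω₁ * ω₂ / (ω₁ + ω₂)) + conj (2 * ω₁ * ω₂ / (ω₁ + ω₂))) /
        (1 + (t : ℂ) ^ 2) := by
  have hω₁ : ω₁ ≠ 0 := by
    intro h; rw [h] at h₁; simp at h₁
  have hω₂ : ω₂ ≠ 0 := by
    intro h; rw [h] at h₂; simp at h₂
  have hm1 : ω₁ * conj ω₁ = 1 := by
    rw [Complex.mul_conj]; norm_cast; rw [Complex.normSq_eq_norm_sq, h₁]; norm_num
  have hm2 : ω₂ * conj ω₂ = 1 := by
    rw [Complex.mul_conj]; norm_cast; rw [Complex.normSq_eq_norm_sq, h₂]; norm_num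
  have hc1 : conj ω₁ = ω₁⁻¹ := by
    field_simp
    linear_combination hm1
  have hc2 : conj ω₂ = ω₂⁻¹ := by
    field_simp
    linear_combination hm2
  have hdne : ω₁ - ω₂ ≠ 0 := sub_ne_zero.mpr hne
  have ht2 : ((t : ℂ) ^ 2 + 1) ≠ 0 := by
    intro h
    have : ((t:ℝ)^2 + 1 : ℝ) = 0 := by exact_mod_cast h
    nlinarith
  have ht2' : ((1 : ℂ) - (t : ℂ) ^ 2) ≠ 0 := by
    intro h
    have : ((1:ℝ) - t^2 : ℝ) = 0 := by exact_mod_cast h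
    nlinarith
  have hden : ((t : ℂ) ^ 2 + 1) * (ω₁ + ω₂) ≠ 0 := mul_ne_zero ht2 hsum
  constructor
  · ext z
    simp only [Set.mem_inter_iff, Set.mem_setOf_eq, Set.mem_singleton_iff]
    constructor
    · rintro ⟨hz1, hz2⟩
      have key : ((1 : ℂ) - (t : ℂ) ^ 2) * (ω₁ - ω₂) *
          ((((t : ℂ) ^ 2 + 1) * (ω₁ + ω₂)) * z - 2 * (ω₁ * ω₂ * (t : ℂ) ^ 2 + 1)) = 0 := by
        linear_combination (1 - (t:ℂ)^2 * ω₂^2) * hz1 - (1 - (t:ℂ)^2 * ω₁^2) * hz2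
      have h0 : (((t : ℂ) ^ 2 + 1) * (ω₁ + ω₂)) * z - 2 * (ω₁ * ω₂ * (t : ℂ) ^ 2 + 1) = 0 := by
        rcases mul_eq_zero.mp key with h | h
        · exact absurd h (mul_ne_zero ht2' hdne)
        · exact h
      field_simp
      linear_combination h0
    · rintro rfl
      have hinv : ω₁⁻¹ + ω₂⁻¹ ≠ 0 := by
        intro h
        apply hsum
        have h5 : ω₁ * ω₂ * (ω₁⁻¹ + ω₂⁻¹) = ω₁ + ω₂ := by field_simp; ring
        rw [h, mul_zero] at h5
        exact h5.symm
      have hcz : conj (2 * (ω₁ * ω₂ * (t : ℂ) ^ 2 + 1) / (((t : ℂ) ^ 2 + 1) * (ω₁ + ω₂))) =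
          2 * ((t : ℂ) ^ 2 + ω₁ * ω₂) / (((t : ℂ) ^ 2 + 1) * (ω₁ + ω₂)) := by
        rw [map_div₀]
        simp only [map_mul, map_add, map_ofNat, map_one, map_pow, Complex.conj_ofReal,
          hc1, hc2]
        rw [div_eq_div_iff (mul_ne_zero ht2 hinv) hden]
        field_simp
        ring
      constructor
      · rw [hcz]
        field_simp
        ring
      · rw [hcz]
        field_simp
        ring
  · have hinv : ω₁⁻¹ + ω₂⁻¹ ≠ 0 := by
      intro h
      apply hsum
      have h5 : ω₁ * ω₂ * (ω₁⁻¹ + ω₂⁻¹) = ω₁ + ω₂ := by field_simp; ring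
      rw [h, mul_zero] at h5
      exact h5.symm
    have hc : conj (2 * ω₁ * ω₂ / (ω₁ + ω₂)) = 2 / (ω₁ + ω₂) := by
      rw [map_div₀]
      simp only [map_mul, map_add, map_ofNat, hc1, hc2]
      rw [div_eq_div_iff hinv hsum]
      field_simp
      ring
    rw [hc]
    have h1t : (1 : ℂ) + (t : ℂ) ^ 2 ≠ 0 := by rwa [add_comm] at ht2
    field_simp
    ring
end

section
/- For t > 0 and w on the unit circle with w ≠ -1, ψ_t(w) = ((1-2t)w + (1+2t)conj(w) - 2)/(w + conj(w) + 2), and the resulting point z lies on the parabola (z - conj(z))² = 8t²(z + conj(z)). Moreover, w can be recovered as w = (-(z + conj(z) + 2)t + z - conj(z))/((z + conj(z) - 2)t). -/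
open Complex ComplexConjugate

/-- On the unit circle (away from `-1`), `ψ_t` is given by the stated boundary
formula, its values lie on the parabola `(z - conj z)² = 8t²(z + conj z)`, and
`w` can be recovered from `z = ψ_t(w)` by the stated formula. -/
theorem psi_on_circle (t : ℝ) (ht : 0 < t) (w : ℂ)
    (hw : ‖w‖ = 1) (hw1 : w ≠ -1) :
    ∀ z : ℂ, z = ((1 - w) / (1 + w) + (t : ℂ)) ^ 2 - (t : ℂ) ^ 2 →
      z = ((1 - 2 * (t : ℂ)) * w + (1 + 2 * (t : ℂ)) * conj w - 2) /
        (w + conj w + 2) ∧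
      (z - conj z) ^ 2 = 8 * (t : ℂ) ^ 2 * (z + conj z) ∧
      w = (-(z + conj z + 2) * (t : ℂ) + z - conj z) /
        ((z + conj z - 2) * (t : ℂ)) := by
  intro z hz
  have hw0 : w ≠ 0 := by intro h; simp [h] at hw
  have hconj : conj w = w⁻¹ := (Complex.inv_eq_conj hw).symm
  have h1 : (1 : ℂ) + w ≠ 0 := by
    intro h; exact hw1 (by linear_combination h)
  have ht0 : (t : ℂ) ≠ 0 := Complex.ofReal_ne_zero.2 ht.ne'
  have h2 : (1 : ℂ) + w⁻¹ ≠ 0 := by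
    have : (1 : ℂ) + w⁻¹ = (1 + w) / w := by field_simp [hw0]; ring
    rw [this]; exact div_ne_zero h1 hw0
  have hinv : (1 - w⁻¹) / (1 + w⁻¹) = -((1 - w) / (1 + w)) := by
    rw [div_eq_iff h2]; field_simp [hw0, h1]; ring
  have hconjz : conj z = (-((1 - w) / (1 + w)) + (t : ℂ)) ^ 2 - (t : ℂ) ^ 2 := by
    rw [hz]; simp [map_sub, map_add, map_div₀, map_pow, hconj, hinv]
  have hden : w + w⁻¹ + 2 ≠ 0 := by
    have : w + w⁻¹ + 2 = (1 + w) ^ 2 / w := by field_simp [hw0]; ring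
    rw [this]; exact div_ne_zero (pow_ne_zero _ h1) hw0
  have hsum : z + conj z = 2 * ((1 - w) / (1 + w)) ^ 2 := by
    rw [hconjz, hz]; ring
  have hdiff : z - conj z = 4 * (t : ℂ) * ((1 - w) / (1 + w)) := by
    rw [hconjz, hz]; ring
  have hkey : z + conj z - 2 = -8 * w / (1 + w) ^ 2 := by
    rw [hsum, div_pow]
    rw [eq_div_iff (pow_ne_zero _ h1)]
    field_simp [h1]
    ring
  have hD : (z + conj z - 2) * (t : ℂ) ≠ 0 := by
    refine mul_ne_zero ?_ ht0
    rw [hkey]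
    exact div_ne_zero (mul_ne_zero (by norm_num) hw0) (pow_ne_zero _ h1)
  refine ⟨?_, ?_, ?_⟩
  · rw [hconj, eq_div_iff hden, hz]
    field_simp [hw0, h1]
    ring
  · linear_combination (z - conj z + 4 * (t : ℂ) * ((1 - w) / (1 + w))) * hdiff
      - 8 * (t : ℂ) ^ 2 * hsum
  · rw [eq_div_iff hD, hconjz, hz]
    field_simp [hw0, h1]
    ring
end

section
/- Let 0 < t < 1 and a, b ∈ 𝔻. Define U = (a-b)²t⁴ + 2(2|ab|² - |a+b|² + 2)t² + (conj(a)-conj(b))² and P = -2((2|ab|² - |a+b|² + 2)(t⁴+1) + ((a-b)² + (conj(a)-conj(b))²)t²). Then P² - 4U conj(U) = 16(1-|a|²)(1-|b|²)|1 - a conj(b)|²(t⁴-1)², which is strictly positive (assuming a conj(b) ≠ 1, which holds since a, b ∈ 𝔻, and t ≠ 1). -/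
open Complex ComplexConjugate

/-- The ellipse-condition discriminant identity for the interior curve of the
Blaschke-like map `φ_t ∘ B ∘ φ_t⁻¹`: `P² - 4U·conj U` equals
`16(1-|a|²)(1-|b|²)|1 - a·conj b|²(t⁴-1)²`, which is strictly positive. -/
theorem ellipse_discriminant_joukowski (t : ℝ) (ht0 : 0 < t) (ht1 : t < 1)
    (a b : ℂ) (ha : ‖a‖ < 1) (hb : ‖b‖ < 1) (U P : ℂ)
    (hU : U = (a - b) ^ 2 * (t : ℂ) ^ 4 +
      2 * ((2 * ‖a * b‖ ^ 2 - ‖a + b‖ ^ 2 + 2 : ℝ) : ℂ) * (t : ℂ) ^ 2 +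
      (conj a - conj b) ^ 2)
    (hP : P = -2 * (((2 * ‖a * b‖ ^ 2 - ‖a + b‖ ^ 2 + 2 : ℝ) : ℂ) *
        ((t : ℂ) ^ 4 + 1) +
      ((a - b) ^ 2 + (conj a - conj b) ^ 2) * (t : ℂ) ^ 2)) :
    P ^ 2 - 4 * U * conj U =
      ((16 * (1 - ‖a‖ ^ 2) * (1 - ‖b‖ ^ 2) *
        ‖1 - a * conj b‖ ^ 2 * (t ^ 4 - 1) ^ 2 : ℝ) : ℂ) ∧
    0 < 16 * (1 - ‖a‖ ^ 2) * (1 - ‖b‖ ^ 2) *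
      ‖1 - a * conj b‖ ^ 2 * (t ^ 4 - 1) ^ 2 := by
  have key : ∀ z : ℂ, ((‖z‖ : ℝ) : ℂ) ^ 2 = z * conj z := fun z => by
    rw [← Complex.ofReal_pow, Complex.sq_norm, Complex.mul_conj]
  have key2 : ∀ z w : ℂ, ((‖z‖ * ‖w‖ : ℝ) : ℂ) ^ 2 =
      z * conj z * (w * conj w) := fun z w => by
    rw [Complex.ofReal_mul, mul_pow, key, key]
  constructor
  · subst hU hP
    push_cast
    simp only [key2, key, map_add, map_mul, map_sub, map_pow, map_ofNat, map_one,
      Complex.conj_conj, Complex.conj_ofReal]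
    ring
  · have h1 : ‖1 - a * conj b‖ ≠ 0 := by
      intro h
      have : (1 : ℂ) - a * conj b = 0 := by
        simpa using (norm_eq_zero).mp h
      have habs : ‖a * conj b‖ < 1 := by
        rw [norm_mul, Complex.norm_conj]
        nlinarith [norm_nonneg a, norm_nonneg b]
      have : a * conj b = 1 := by linear_combination -this
      rw [this] at habs; simp at habs
    have h2 : t ^ 4 - 1 ≠ 0 := by
      have := pow_lt_one₀ ht0.le ht1 (n := 4) (by norm_num)
      intro h; nlinarith
    have ha' : 0 < 1 - ‖a‖ ^ 2 := by nlinarith [norm_nonneg a]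
    have hb' : 0 < 1 - ‖b‖ ^ 2 := by nlinarith [norm_nonneg b]
    positivity
end

section
/- Let t > 0 and a, b ∈ 𝔻. Define U = (|ab|² - |a+b+1|²)² t² - 4|a+1|²|b+1|² t² + 2(|ab|²(a+b-conj(a)-conj(b)) - (conj(a)+conj(b)+1)(a²+b²+1) + (a+b+1)(conj(a)²+conj(b)²+1) + 2(ab - conj(a)conj(b)))t + (a-b)² + (conj(a)-conj(b))² - 2|a+b|² + 4(|ab|²+1), and P = 2((|ab|² - |a+b+1|²)² - 4|a+1|²|b+1|²)t² - 2(4|ab|² + (a-b)² + (conj(a)-conj(b))² - 2|a+b|² + 4). Then P² - 4U conj(U) = -64(1-|b|²)(1-|a|²)|1-a conj(b)|² t² ((1-|b|²)(1-|a|²) - 4(Re(a)+1)(Re(b)+1)), and this quantity is strictly positive. -/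
set_option maxHeartbeats 2000000


open Complex ComplexConjugate

lemma abs_sq_cast (z : ℂ) : ((‖z‖ ^ 2 : ℝ) : ℂ) = z * conj z := by
  rw [Complex.sq_norm, Complex.mul_conj]

lemma abs_sq_cast' (z : ℂ) : ((‖z‖ : ℝ) : ℂ) ^ 2 = z * conj z := by
  rw [← Complex.ofReal_pow, Complex.sq_norm, Complex.mul_conj]

lemma re_cast (z : ℂ) : ((z.re : ℝ) : ℂ) = (z + conj z) / 2 := by
  rw [Complex.add_conj]; push_cast; ring

/-- The ellipse-condition discriminant identity for the interior curve of the
Blaschke-like map `ψ_t ∘ B ∘ ψ_t⁻¹` on the parabolic region, together with its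
strict positivity. -/
theorem ellipse_discriminant_parabola (t : ℝ) (ht : 0 < t)
    (a b : ℂ) (ha : ‖a‖ < 1) (hb : ‖b‖ < 1) (U P : ℂ)
    (hU : U = (((‖a * b‖ ^ 2 - ‖a + b + 1‖ ^ 2) ^ 2 : ℝ) : ℂ) * (t : ℂ) ^ 2 -
      ((4 * ‖a + 1‖ ^ 2 * ‖b + 1‖ ^ 2 : ℝ) : ℂ) * (t : ℂ) ^ 2 +
      2 * (((‖a * b‖ ^ 2 : ℝ) : ℂ) * (a + b - conj a - conj b) -
        (conj a + conj b + 1) * (a ^ 2 + b ^ 2 + 1) +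
        (a + b + 1) * ((conj a) ^ 2 + (conj b) ^ 2 + 1) +
        2 * (a * b - conj a * conj b)) * (t : ℂ) +
      (a - b) ^ 2 + (conj a - conj b) ^ 2 -
      ((2 * ‖a + b‖ ^ 2 : ℝ) : ℂ) +
      ((4 * (‖a * b‖ ^ 2 + 1) : ℝ) : ℂ))
    (hP : P = 2 * (((‖a * b‖ ^ 2 - ‖a + b + 1‖ ^ 2) ^ 2 -
        4 * ‖a + 1‖ ^ 2 * ‖b + 1‖ ^ 2 : ℝ) : ℂ) * (t : ℂ) ^ 2 -
      2 * (((4 * ‖a * b‖ ^ 2 : ℝ) : ℂ) + (a - b) ^ 2 + (conj a - conj b) ^ 2 -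
        ((2 * ‖a + b‖ ^ 2 : ℝ) : ℂ) + 4)) :
    P ^ 2 - 4 * U * conj U =
      ((-64 * (1 - ‖b‖ ^ 2) * (1 - ‖a‖ ^ 2) *
        ‖1 - a * conj b‖ ^ 2 * t ^ 2 *
        ((1 - ‖b‖ ^ 2) * (1 - ‖a‖ ^ 2) -
          4 * (a.re + 1) * (b.re + 1)) : ℝ) : ℂ) ∧
    0 < -64 * (1 - ‖b‖ ^ 2) * (1 - ‖a‖ ^ 2) *
      ‖1 - a * conj b‖ ^ 2 * t ^ 2 *
      ((1 - ‖b‖ ^ 2) * (1 - ‖a‖ ^ 2) -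
        4 * (a.re + 1) * (b.re + 1)) := by
  constructor
  · subst hU hP
    push_cast [abs_sq_cast, abs_sq_cast', re_cast]
    simp only [map_add, map_sub, map_mul, map_pow, map_one, map_ofNat, map_neg, map_div₀,
      Complex.conj_conj, Complex.conj_ofReal]
    ring
  · have ha2 : ‖a‖ ^ 2 = a.re ^ 2 + a.im ^ 2 := by
      rw [Complex.sq_norm, Complex.normSq_apply]; ring
    have hb2 : ‖b‖ ^ 2 = b.re ^ 2 + b.im ^ 2 := by
      rw [Complex.sq_norm, Complex.normSq_apply]; ring
    have hra : |a.re| < 1 := lt_of_le_of_lt (Complex.abs_re_le_norm a) ha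
    have hrb : |b.re| < 1 := lt_of_le_of_lt (Complex.abs_re_le_norm b) hb
    have hra1 : -1 < a.re := by cases abs_lt.mp hra; linarith
    have hra2 : a.re < 1 := (abs_lt.mp hra).2
    have hrb1 : -1 < b.re := by cases abs_lt.mp hrb; linarith
    have hrb2 : b.re < 1 := (abs_lt.mp hrb).2
    have hA : 0 < 1 - ‖a‖ ^ 2 := by nlinarith [norm_nonneg a]
    have hB : 0 < 1 - ‖b‖ ^ 2 := by nlinarith [norm_nonneg b]
    have e1 : (1:ℝ) - ‖a‖ ^ 2 ≤ (1 - a.re) * (1 + a.re) := by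
      nlinarith [sq_nonneg a.im]
    have e2 : (1:ℝ) - ‖b‖ ^ 2 ≤ (1 - b.re) * (1 + b.re) := by
      nlinarith [sq_nonneg b.im]
    have hp : (0:ℝ) < 1 + a.re := by linarith
    have hq : (0:ℝ) < 1 + b.re := by linarith
    have hpq : (0:ℝ) < (1 + a.re) * (1 + b.re) := mul_pos hp hq
    have hfac : (1 + a.re) * (1 + b.re) - 2 * (1 + a.re) - 2 * (1 + b.re) < 0 := by
      nlinarith [mul_pos (by linarith : (0:ℝ) < 2 - (1 + a.re)) hq]
    have e3 : ((1 - a.re) * (1 + a.re)) * ((1 - b.re) * (1 + b.re)) <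
        4 * ((a.re + 1) * (b.re + 1)) := by
      nlinarith [mul_neg_of_pos_of_neg hpq hfac]
    have e4 : (1 - ‖a‖ ^ 2) * (1 - ‖b‖ ^ 2) ≤
        ((1 - a.re) * (1 + a.re)) * ((1 - b.re) * (1 + b.re)) :=
      mul_le_mul e1 e2 hB.le (by nlinarith)
    have hD : (1 - ‖b‖ ^ 2) * (1 - ‖a‖ ^ 2) -
        4 * (a.re + 1) * (b.re + 1) < 0 := by nlinarith [e3, e4]
    have hC : 0 < ‖1 - a * conj b‖ ^ 2 := by
      have hne : a * conj b ≠ 1 := by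
        intro h
        have h2 := congrArg norm h
        rw [norm_mul, norm_one, Complex.norm_conj] at h2
        nlinarith [norm_nonneg a, norm_nonneg b]
      exact pow_pos (norm_pos_iff.mpr (sub_ne_zero.mpr hne.symm)) 2
    have ht2 : 0 < t ^ 2 := by positivity
    nlinarith [mul_pos (mul_pos (mul_pos (mul_pos hB hA) hC) ht2) (neg_pos.mpr hD)]
end
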